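/- arXiv:1705.02767 — 4 statements merged into one kernel-verified Lean document; each statement's English description precedes it below -/
import Mathlib

section
/- Let (A, μ) be a multiarrangement in K^ℓ and suppose θ_1, ..., θ_ℓ ∈ D(A, μ) are homogeneous and independent over S with ∑_i pdeg(θ_i) = |μ| = ∑_{H ∈ A} μ(H). Then {θ_1, ..., θ_ℓ} is an S-basis of D(A, μ), so (A, μ) is free. -/
open MvPolynomial

open scoped Classical

noncomputable section

/-- A (polynomial) derivation on `K[x_1,...,x_n]`, given by its coefficient
vector: `θ` represents `∑ i, θ i * ∂/∂ x i`. -/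
abbrev MvDer (n : ℕ) (K : Type*) [Field K] : Type _ := Fin n → MvPolynomial (Fin n) K

/-- Application of a derivation (given by its coefficient vector) to a polynomial,
as a linear map over the polynomial ring. -/
def derAppL {K : Type*} [Field K] {n : ℕ} (f : MvPolynomial (Fin n) K) :
    MvDer n K →ₗ[MvPolynomial (Fin n) K] MvPolynomial (Fin n) K where
  toFun θ := ∑ i, θ i * MvPolynomial.pderiv i f
  map_add' θ₁ θ₂ := by
    simp [add_mul, Finset.sum_add_distrib]
  map_smul' c θ := by
    simp [Finset.mul_sum, smul_eq_mul, mul_assoc]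

/-- The module of derivations `D(A, μ)` of the multiarrangement with defining linear
forms `A` and multiplicity function `μ`:
`D(A,μ) = {θ : θ(α) ∈ α^(μ α) · S for all α ∈ A}`. -/
def Dmod {K : Type*} [Field K] {n : ℕ} (A : Finset (MvPolynomial (Fin n) K))
    (μ : MvPolynomial (Fin n) K → ℕ) :
    Submodule (MvPolynomial (Fin n) K) (MvDer n K) :=
  ⨅ α ∈ A, Submodule.comap (derAppL α) (Ideal.span {α ^ μ α})

/-- The module of derivations of a multiarrangement given as a finite set of
(form, multiplicity) pairs. -/
def DmodP {K : Type*} [Field K] {n : ℕ} (P : Finset (MvPolynomial (Fin n) K × ℕ)) :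
    Submodule (MvPolynomial (Fin n) K) (MvDer n K) :=
  ⨅ p ∈ P, Submodule.comap (derAppL p.1) (Ideal.span {p.1 ^ p.2})

/-- A derivation is homogeneous of polynomial degree `d` if all its coefficient
polynomials are homogeneous of degree `d`. -/
def IsHomogDer {K : Type*} [Field K] {n : ℕ} (θ : MvDer n K) (d : ℕ) : Prop :=
  ∀ i, (θ i).IsHomogeneous d

/-- `θ` is a basis of the submodule `D` of the module of derivations. -/
def IsBasisOf {K : Type*} [Field K] {n : ℕ} (θ : Fin n → MvDer n K)
    (D : Submodule (MvPolynomial (Fin n) K) (MvDer n K)) : Prop :=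
  (∀ i, θ i ∈ D) ∧ LinearIndependent (MvPolynomial (Fin n) K) θ ∧
    Submodule.span (MvPolynomial (Fin n) K) (Set.range θ) = D

/-- `D` is a free module with a homogeneous basis of degrees `e 0, ..., e (n-1)`. -/
def FreeWithExps {K : Type*} [Field K] {n : ℕ}
    (D : Submodule (MvPolynomial (Fin n) K) (MvDer n K)) (e : Fin n → ℕ) : Prop :=
  ∃ θ : Fin n → MvDer n K, IsBasisOf θ D ∧ ∀ i, IsHomogDer (θ i) (e i)

/-- `D` is a free module with a homogeneous basis whose multiset of degrees is `E`. -/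
def FreeWithExpM {K : Type*} [Field K] {n : ℕ}
    (D : Submodule (MvPolynomial (Fin n) K) (MvDer n K)) (E : Multiset ℕ) : Prop :=
  ∃ (θ : Fin n → MvDer n K) (d : Fin n → ℕ), IsBasisOf θ D ∧
    (∀ i, IsHomogDer (θ i) (d i)) ∧ Multiset.map d Finset.univ.val = E

/-- The zero set (kernel) of the linear form given by the polynomial `α`. -/
def kerV {K : Type*} [Field K] {n : ℕ} (α : MvPolynomial (Fin n) K) : Set (Fin n → K) :=
  {v | MvPolynomial.eval v α = 0}

/-- Pull back a polynomial along a linear embedding `ι : K^m → K^n`; for a linear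
form `α` this is the restriction of `α` to the image of `ι`, expressed in the
coordinates of `K^m`. -/
def restrictForm {K : Type*} [Field K] {m n : ℕ} (ι : (Fin m → K) →ₗ[K] (Fin n → K))
    (α : MvPolynomial (Fin n) K) : MvPolynomial (Fin m) K :=
  MvPolynomial.aeval
    (fun i : Fin n => ∑ j : Fin m, MvPolynomial.C (ι (Pi.single j 1) i) * MvPolynomial.X j) α

/-- `A''` is (a set of defining forms for) the restriction of the arrangement `A`
to the hyperplane `H₀ = ker α₀`, where `ι` is a linear parametrization of `H₀`:
the elements of `A''` are nonzero linear forms with pairwise distinct kernels,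
whose kernels are exactly the intersections `H ∩ H₀` for `H ∈ A \ {H₀}`. -/
def IsRestriction {K : Type*} [Field K] {m n : ℕ} (A : Finset (MvPolynomial (Fin n) K))
    (α₀ : MvPolynomial (Fin n) K) (ι : (Fin m → K) →ₗ[K] (Fin n → K))
    (A'' : Finset (MvPolynomial (Fin m) K)) : Prop :=
  (∀ β ∈ A'', β.IsHomogeneous 1 ∧ β ≠ 0) ∧
  (∀ β₁ ∈ A'', ∀ β₂ ∈ A'', kerV β₁ = kerV β₂ → β₁ = β₂) ∧
  (∀ α ∈ A, α ≠ α₀ → ∃ β ∈ A'', kerV β = kerV (restrictForm ι α)) ∧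
  (∀ β ∈ A'', ∃ α ∈ A, α ≠ α₀ ∧ kerV β = kerV (restrictForm ι α))

/-- Ziegler's canonical multiplicity: for a hyperplane `Y = ker β` of the
restriction, `κ(Y) = |A_Y| - 1`, the number of hyperplanes of `A` (other than
`H₀`) lying above `Y`. -/
def zieglerMult {K : Type*} [Field K] {m n : ℕ} (A : Finset (MvPolynomial (Fin n) K))
    (ι : (Fin m → K) →ₗ[K] (Fin n → K)) (β : MvPolynomial (Fin m) K) : ℕ :=
  ({α : MvPolynomial (Fin n) K |
      α ∈ A ∧ ∀ w ∈ kerV β, MvPolynomial.eval (ι w) α = 0}).ncard - 1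

end

section SaitoAux

open Finsupp MvPolynomial

variable {K : Type*} [Field K] {n : ℕ}

lemma degree_fin_eq (d : Fin n →₀ ℕ) : d.degree = ∑ i, d i :=
  Finset.sum_subset (Finset.subset_univ _) (fun i _ hi => Finsupp.notMem_support_iff.mp hi)

lemma degree_fin_add (a b : Fin n →₀ ℕ) : (a + b).degree = a.degree + b.degree := by
  simp [degree_fin_eq, Finset.sum_add_distrib]

lemma degree_one_eq_single {d : Fin n →₀ ℕ} (hd : d.degree = 1) :
    ∃ j, d = Finsupp.single j 1 := by
  rw [degree_fin_eq] at hd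
  have hex : ∃ j, d j ≠ 0 := by
    by_contra h
    push_neg at h
    simp [h] at hd
  obtain ⟨j, hj⟩ := hex
  refine ⟨j, ?_⟩
  have hsum := hd
  rw [← Finset.add_sum_erase _ _ (Finset.mem_univ j)] at hsum
  have h1 : d j = 1 ∧ ∑ k ∈ Finset.univ.erase j, d k = 0 := by omega
  have hzero : ∀ k ∈ Finset.univ.erase j, d k = 0 := Finset.sum_eq_zero_iff.mp h1.2
  ext k
  rcases eq_or_ne k j with rfl | hk
  · simp [h1.1]
  · rw [Finsupp.single_eq_of_ne' (Ne.symm hk)]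
    exact hzero k (Finset.mem_erase.mpr ⟨hk, Finset.mem_univ k⟩)

/-- A fixed monomial order on `Fin n →₀ ℕ`. -/
noncomputable def mo (n : ℕ) : MonomialOrder (Fin n) := MonomialOrder.lex

lemma exists_lexmax {p : MvPolynomial (Fin n) K} (hp : p ≠ 0) :
    ∃ a, MvPolynomial.coeff a p ≠ 0 ∧ ∀ u ∈ p.support, (mo n).toSyn u ≤ (mo n).toSyn a := by
  obtain ⟨a, ha, hmax⟩ := Finset.exists_max_image p.support (fun u => (mo n).toSyn u)
    (MvPolynomial.support_nonempty.mpr hp)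
  exact ⟨a, MvPolynomial.mem_support_iff.mp ha, hmax⟩

lemma coeff_mul_lexmax {p q : MvPolynomial (Fin n) K} {a b : Fin n →₀ ℕ}
    (ha : ∀ u ∈ p.support, (mo n).toSyn u ≤ (mo n).toSyn a)
    (hb : ∀ u ∈ q.support, (mo n).toSyn u ≤ (mo n).toSyn b) :
    MvPolynomial.coeff (a + b) (p * q) =
      MvPolynomial.coeff a p * MvPolynomial.coeff b q := by
  rw [MvPolynomial.coeff_mul]
  apply Finset.sum_eq_single (a, b)
  · rintro ⟨u, v⟩ huv hne
    rw [Finset.HasAntidiagonal.mem_antidiagonal] at huv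
    by_contra h0
    have hu : (mo n).toSyn u ≤ (mo n).toSyn a :=
      ha u (MvPolynomial.mem_support_iff.mpr (left_ne_zero_of_mul h0))
    have hv : (mo n).toSyn v ≤ (mo n).toSyn b :=
      hb v (MvPolynomial.mem_support_iff.mpr (right_ne_zero_of_mul h0))
    have hlt : (mo n).toSyn (u + v) < (mo n).toSyn (a + b) := by
      rw [map_add, map_add]
      rcases eq_or_ne u a with rfl | hua
      · have hvb : v ≠ b := fun h => hne (by rw [h])
        have hv' : (mo n).toSyn v < (mo n).toSyn b :=
          lt_of_le_of_ne hv (fun h => hvb ((mo n).toSyn.injective h))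
        exact add_lt_add_of_le_of_lt hu hv'
      · have hu' : (mo n).toSyn u < (mo n).toSyn a :=
          lt_of_le_of_ne hu (fun h => hua ((mo n).toSyn.injective h))
        exact add_lt_add_of_lt_of_le hu' hv
    rw [huv] at hlt
    exact lt_irrefl _ hlt
  · intro h
    simp at h

lemma eq_C_of_lex_le_zero {p : MvPolynomial (Fin n) K}
    (h : ∀ u ∈ p.support, (mo n).toSyn u ≤ (mo n).toSyn (0 : Fin n →₀ ℕ)) :
    p = MvPolynomial.C (MvPolynomial.coeff 0 p) := by
  ext d
  by_cases hd : d = 0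
  · subst hd; simp [MvPolynomial.coeff_C]
  · have hmem : d ∉ p.support := by
      intro hmem
      have h1 := h d hmem
      have h2 : (mo n).toSyn (0 : Fin n →₀ ℕ) ≤ (mo n).toSyn d := (mo n).toSyn_monotone (zero_le : (0 : Fin n →₀ ℕ) ≤ d)
      exact hd ((mo n).toSyn.injective (le_antisymm h1 h2))
    rw [MvPolynomial.notMem_support_iff.mp hmem, MvPolynomial.coeff_C,
      if_neg (fun h => hd h.symm)]

lemma homog_factor_isC {p q : MvPolynomial (Fin n) K} {m : ℕ}
    (hp : p.IsHomogeneous m) (hp0 : p ≠ 0) (hq0 : q ≠ 0)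
    (hpq : (p * q).IsHomogeneous m) :
    ∃ c : K, c ≠ 0 ∧ q = MvPolynomial.C c := by
  obtain ⟨a, ha, hamax⟩ := exists_lexmax hp0
  obtain ⟨b, hb, hbmax⟩ := exists_lexmax hq0
  have hcoeff : MvPolynomial.coeff (a + b) (p * q) ≠ 0 := by
    rw [coeff_mul_lexmax hamax hbmax]
    exact mul_ne_zero ha hb
  have hdab : (a + b).degree = m := by
    by_contra hne
    exact hcoeff (hpq.coeff_eq_zero hne)
  have hda : a.degree = m := by
    by_contra hne
    exact ha (hp.coeff_eq_zero hne)
  have hb0 : b = 0 := by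
    rw [← Finsupp.degree_eq_zero_iff]
    have := degree_fin_add a b
    omega
  subst hb0
  exact ⟨MvPolynomial.coeff 0 q, hb, eq_C_of_lex_le_zero hbmax⟩

lemma isUnit_to_C {p : MvPolynomial (Fin n) K} (h : IsUnit p) :
    ∃ c : K, c ≠ 0 ∧ p = MvPolynomial.C c := by
  obtain ⟨pq, hmul⟩ := isUnit_iff_exists_inv.mp h
  have hp0 : p ≠ 0 :=
    left_ne_zero_of_mul (hmul ▸ (one_ne_zero : (1 : MvPolynomial (Fin n) K) ≠ 0))
  have hq0 : pq ≠ 0 :=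
    right_ne_zero_of_mul (hmul ▸ (one_ne_zero : (1 : MvPolynomial (Fin n) K) ≠ 0))
  obtain ⟨a, ha, hamax⟩ := exists_lexmax hp0
  obtain ⟨b, hb, hbmax⟩ := exists_lexmax hq0
  have hcoeff : MvPolynomial.coeff (a + b) (p * pq) ≠ 0 := by
    rw [coeff_mul_lexmax hamax hbmax]
    exact mul_ne_zero ha hb
  rw [hmul] at hcoeff
  have hab : a + b = 0 := by
    by_contra hne
    exact hcoeff (by rw [MvPolynomial.coeff_one, if_neg (fun h => hne h.symm)])
  have ha0 : a = 0 := by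
    ext i
    have := DFunLike.congr_fun hab i
    simp only [Finsupp.add_apply, Finsupp.coe_zero, Pi.zero_apply] at this ⊢
    omega
  subst ha0
  exact ⟨MvPolynomial.coeff 0 p, ha, eq_C_of_lex_le_zero hamax⟩

lemma isUnit_C_of_ne_zero {c : K} (hc : c ≠ 0) :
    IsUnit (MvPolynomial.C c : MvPolynomial (Fin n) K) :=
  isUnit_iff_exists_inv.mpr ⟨MvPolynomial.C c⁻¹, by
    rw [← MvPolynomial.C_mul, mul_inv_cancel₀ hc, MvPolynomial.C_1]⟩

lemma irreducible_linear {α : MvPolynomial (Fin n) K}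
    (h1 : α.IsHomogeneous 1) (h0 : α ≠ 0) : Irreducible α := by
  constructor
  · intro hu
    obtain ⟨c, hc, hCc⟩ := isUnit_to_C hu
    have hk := h1.coeff_eq_zero (d := 0) (by simp [map_zero])
    rw [hCc] at hk
    simp [MvPolynomial.coeff_C] at hk
    exact hc hk
  · intro p q heq
    have hp0 : p ≠ 0 := by rintro rfl; rw [zero_mul] at heq; exact h0 heq
    have hq0 : q ≠ 0 := by rintro rfl; rw [mul_zero] at heq; exact h0 heq
    obtain ⟨a, ha, hamax⟩ := exists_lexmax hp0
    obtain ⟨b, hb, hbmax⟩ := exists_lexmax hq0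
    have hcoeff : MvPolynomial.coeff (a + b) (p * q) ≠ 0 := by
      rw [coeff_mul_lexmax hamax hbmax]
      exact mul_ne_zero ha hb
    have hpq : (p * q).IsHomogeneous 1 := heq ▸ h1
    have hdab : (a + b).degree = 1 := by
      by_contra hne
      exact hcoeff (hpq.coeff_eq_zero hne)
    rw [degree_fin_add] at hdab
    rcases (by omega : a.degree = 0 ∨ b.degree = 0) with hz | hz
    · left
      have ha0 : a = 0 := (Finsupp.degree_eq_zero_iff a).mp hz
      subst ha0
      rw [eq_C_of_lex_le_zero hamax]
      exact isUnit_C_of_ne_zero ha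
    · right
      have hb0 : b = 0 := (Finsupp.degree_eq_zero_iff b).mp hz
      subst hb0
      rw [eq_C_of_lex_le_zero hbmax]
      exact isUnit_C_of_ne_zero hb

lemma linear_rep {α : MvPolynomial (Fin n) K} (h1 : α.IsHomogeneous 1) :
    α = ∑ j, MvPolynomial.C (MvPolynomial.coeff (Finsupp.single j 1) α) * MvPolynomial.X j := by
  ext d
  rw [MvPolynomial.coeff_sum]
  by_cases hd : ∃ j, d = Finsupp.single j 1
  · obtain ⟨j₀, rfl⟩ := hd
    rw [Finset.sum_eq_single j₀]
    · simp [MvPolynomial.coeff_C_mul, MvPolynomial.coeff_X']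
    · intro j _ hj
      rw [MvPolynomial.coeff_C_mul, MvPolynomial.coeff_X',
        if_neg (fun h => hj (Finsupp.single_left_injective one_ne_zero h)), mul_zero]
    · intro h
      exact absurd (Finset.mem_univ j₀) h
  · push_neg at hd
    have hda : MvPolynomial.coeff d α = 0 := by
      by_contra h
      have hdeg : d.degree = 1 := by
        by_contra hne
        exact h (h1.coeff_eq_zero hne)
      obtain ⟨j, hj⟩ := degree_one_eq_single hdeg
      exact hd j hj
    rw [hda]
    refine (Finset.sum_eq_zero fun j _ => ?_).symm
    rw [MvPolynomial.coeff_C_mul, MvPolynomial.coeff_X',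
      if_neg (fun h => hd j h.symm), mul_zero]

lemma pderiv_linear {α : MvPolynomial (Fin n) K} (h1 : α.IsHomogeneous 1) (j : Fin n) :
    MvPolynomial.pderiv j α =
      MvPolynomial.C (MvPolynomial.coeff (Finsupp.single j 1) α) := by
  conv_lhs => rw [linear_rep h1]
  rw [map_sum, Finset.sum_eq_single j]
  · rw [MvPolynomial.pderiv_C_mul, MvPolynomial.pderiv_X_self, mul_one]
  · intro i _ hij
    rw [MvPolynomial.pderiv_C_mul, MvPolynomial.pderiv_X_of_ne hij, mul_zero]
  · intro h
    exact absurd (Finset.mem_univ j) h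

lemma mem_Dmod_iff {A : Finset (MvPolynomial (Fin n) K)} {μ : MvPolynomial (Fin n) K → ℕ}
    {v : MvDer n K} :
    v ∈ Dmod A μ ↔ ∀ α ∈ A, α ^ μ α ∣ ∑ j, v j * MvPolynomial.pderiv j α := by
  simp only [Dmod, Submodule.mem_iInf, Submodule.mem_comap, Ideal.mem_span_singleton,
    derAppL, LinearMap.coe_mk, AddHom.coe_mk]

lemma pow_dvd_det {A : Finset (MvPolynomial (Fin n) K)} {μ : MvPolynomial (Fin n) K → ℕ}
    (N : Matrix (Fin n) (Fin n) (MvPolynomial (Fin n) K))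
    (hN : ∀ i, N i ∈ Dmod A μ) {α : MvPolynomial (Fin n) K} (hα : α ∈ A)
    (h1 : α.IsHomogeneous 1) (h0 : α ≠ 0) :
    α ^ μ α ∣ N.det := by
  classical
  obtain ⟨a, ha⟩ := MvPolynomial.exists_coeff_ne_zero h0
  have hadeg : a.degree = 1 := by
    by_contra hne
    exact ha (h1.coeff_eq_zero hne)
  obtain ⟨j₀, rfl⟩ := degree_one_eq_single hadeg
  have hrow : ∀ i, α ^ μ α ∣ ∑ j, N i j * MvPolynomial.pderiv j α :=
    fun i => (mem_Dmod_iff.mp (hN i)) α hα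
  have hq : ∀ i, ∃ t,
      ∑ j, (MvPolynomial.C (MvPolynomial.coeff (Finsupp.single j 1) α) : MvPolynomial (Fin n) K) • N i j
        = α ^ μ α * t := by
    intro i
    obtain ⟨t, ht⟩ := hrow i
    refine ⟨t, ?_⟩
    rw [← ht]
    refine Finset.sum_congr rfl (fun j _ => ?_)
    rw [pderiv_linear h1 j, smul_eq_mul, mul_comm]
  choose q hqq using hq
  have key := Matrix.det_updateCol_sum N j₀
    (fun j => (MvPolynomial.C (MvPolynomial.coeff (Finsupp.single j 1) α) : MvPolynomial (Fin n) K))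
  have key2 : (N.updateCol j₀ (fun k => ∑ i,
      (MvPolynomial.C (MvPolynomial.coeff (Finsupp.single i 1) α) : MvPolynomial (Fin n) K) • N k i)).det
      = α ^ μ α * (N.updateCol j₀ q).det := by
    have hcol : (fun k => ∑ i,
        (MvPolynomial.C (MvPolynomial.coeff (Finsupp.single i 1) α) : MvPolynomial (Fin n) K) • N k i)
        = fun k => α ^ μ α * q k := by
      funext k
      rw [hqq k]
    rw [hcol]
    exact Matrix.det_updateCol_smul N j₀ (α ^ μ α) q
  rw [key2, smul_eq_mul] at key
  refine ⟨MvPolynomial.C (MvPolynomial.coeff (Finsupp.single j₀ 1) α)⁻¹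
    * (N.updateCol j₀ q).det, ?_⟩
  have hCinv : MvPolynomial.C (MvPolynomial.coeff (Finsupp.single j₀ 1) α)⁻¹
      * MvPolynomial.C (MvPolynomial.coeff (Finsupp.single j₀ 1) α)
      = (1 : MvPolynomial (Fin n) K) := by
    rw [← MvPolynomial.C_mul, inv_mul_cancel₀ ha, MvPolynomial.C_1]
  calc N.det
      = MvPolynomial.C (MvPolynomial.coeff (Finsupp.single j₀ 1) α)⁻¹
        * (MvPolynomial.C (MvPolynomial.coeff (Finsupp.single j₀ 1) α) * N.det) := by
        rw [← mul_assoc, hCinv, one_mul]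
    _ = MvPolynomial.C (MvPolynomial.coeff (Finsupp.single j₀ 1) α)⁻¹
        * (α ^ μ α * (N.updateCol j₀ q).det) := by rw [key]
    _ = α ^ μ α * (MvPolynomial.C (MvPolynomial.coeff (Finsupp.single j₀ 1) α)⁻¹
        * (N.updateCol j₀ q).det) := by ring

lemma Q_dvd_det {A : Finset (MvPolynomial (Fin n) K)}
    (hforms : ∀ α ∈ A, α.IsHomogeneous 1 ∧ α ≠ 0)
    (hdist : ∀ α ∈ A, ∀ β ∈ A, α ≠ β → ∀ c : K, α ≠ MvPolynomial.C c * β)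
    {μ : MvPolynomial (Fin n) K → ℕ}
    (N : Matrix (Fin n) (Fin n) (MvPolynomial (Fin n) K))
    (hN : ∀ i, N i ∈ Dmod A μ) :
    (∏ α ∈ A, α ^ μ α) ∣ N.det := by
  apply Finset.prod_dvd_of_isRelPrime
  · intro α hα β hβ hne
    rw [Finset.mem_coe] at hα hβ
    simp only [Function.onFun]
    have hirr := irreducible_linear (hforms α hα).1 (hforms α hα).2
    have hndvd : ¬ α ∣ β := by
      rintro ⟨g, hg⟩
      have hg0 : g ≠ 0 := by
        rintro rfl
        rw [mul_zero] at hg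
        exact (hforms β hβ).2 hg
      obtain ⟨c, hc, rfl⟩ := homog_factor_isC (hforms α hα).1 (hforms α hα).2 hg0
        (hg ▸ (hforms β hβ).1)
      exact hdist β hβ α hα (Ne.symm hne) c (by rw [hg, mul_comm])
    exact (hirr.isRelPrime_iff_not_dvd.mpr hndvd).pow
  · intro α hα
    exact pow_dvd_det N hN hα (hforms α hα).1 (hforms α hα).2

lemma det_homog (N : Matrix (Fin n) (Fin n) (MvPolynomial (Fin n) K)) (d : Fin n → ℕ)
    (h : ∀ i j, (N i j).IsHomogeneous (d i)) :
    N.det.IsHomogeneous (∑ i, d i) := by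
  rw [Matrix.det_apply]
  apply MvPolynomial.IsHomogeneous.sum
  intro σ _
  have hp : (∏ i, N (σ i) i).IsHomogeneous (∑ i, d (σ i)) :=
    MvPolynomial.IsHomogeneous.prod _ _ _ (fun i _ => h _ _)
  have he : ∑ i, d (σ i) = ∑ i, d i := Equiv.sum_comp σ d
  rw [he] at hp
  rcases Int.units_eq_one_or (Equiv.Perm.sign σ) with hs | hs <;> rw [hs]
  · simpa using hp
  · have : ((-1 : ℤˣ) • ∏ i, N (σ i) i) = -(∏ i, N (σ i) i) := by
      rw [Units.smul_def]
      simp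
    rw [this]
    exact hp.neg

end SaitoAux

/-- (Homogeneous form of Ziegler–Saito.) If `θ_1, ..., θ_ℓ ∈ D(A, μ)` are
homogeneous, independent over `S`, and their polynomial degrees sum to
`|μ| = ∑ μ(H)`, then they form a basis of `D(A, μ)`; in particular `(A, μ)`
is free with these exponents. -/
theorem ziegler_saito_homogeneous
    {K : Type*} [Field K] {n : ℕ}
    (A : Finset (MvPolynomial (Fin n) K))
    (hforms : ∀ α ∈ A, α.IsHomogeneous 1 ∧ α ≠ 0)
    (hdist : ∀ α ∈ A, ∀ β ∈ A, α ≠ β → ∀ c : K, α ≠ MvPolynomial.C c * β)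
    (μ : MvPolynomial (Fin n) K → ℕ)
    (θ : Fin n → MvDer n K) (d : Fin n → ℕ)
    (hθ : ∀ i, θ i ∈ Dmod A μ)
    (hhom : ∀ i, IsHomogDer (θ i) (d i))
    (hind : LinearIndependent (MvPolynomial (Fin n) K) θ)
    (hdeg : ∑ i, d i = ∑ α ∈ A, μ α) :
    IsBasisOf θ (Dmod A μ) ∧ FreeWithExps (Dmod A μ) d := by
  classical
  let M : Matrix (Fin n) (Fin n) (MvPolynomial (Fin n) K) := Matrix.of θ
  have hMrow : ∀ i, M i ∈ Dmod A μ := hθ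
  have hdet0 : M.det ≠ 0 := by
    intro h
    obtain ⟨v, hv0, hv⟩ := Matrix.exists_vecMul_eq_zero_iff.mpr h
    refine hv0 (funext (Fintype.linearIndependent_iff.mp hind v ?_))
    funext j
    have := congr_fun hv j
    simp only [Matrix.vecMul, dotProduct, Pi.zero_apply] at this
    simpa [M, Finset.sum_apply] using this
  set Q : MvPolynomial (Fin n) K := ∏ α ∈ A, α ^ μ α with hQ
  have hQdvd : Q ∣ M.det := Q_dvd_det hforms hdist M hMrow
  obtain ⟨r, hr⟩ := hQdvd
  have hQhom : Q.IsHomogeneous (∑ α ∈ A, μ α) :=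
    MvPolynomial.IsHomogeneous.prod _ _ _
      (fun α hα => by simpa using ((hforms α hα).1).pow (μ α))
  have hdethom : M.det.IsHomogeneous (∑ α ∈ A, μ α) := by
    rw [← hdeg]
    exact det_homog M d (fun i j => hhom i j)
  have hr0 : r ≠ 0 := by
    rintro rfl
    rw [mul_zero] at hr
    exact hdet0 hr
  have hQ0 : Q ≠ 0 := by
    rintro h
    rw [h, zero_mul] at hr
    exact hdet0 hr
  obtain ⟨c, hc, hrC⟩ := homog_factor_isC hQhom hQ0 hr0 (by rwa [hr] at hdethom)
  have hspan : ∀ θ' ∈ Dmod A μ,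
      θ' ∈ Submodule.span (MvPolynomial (Fin n) K) (Set.range θ) := by
    intro θ' hθ'
    have hgdet : ∀ j, Matrix.cramer M.transpose θ' j = (M.updateRow j θ').det := fun j => by
      rw [Matrix.cramer_apply, Matrix.updateCol_transpose, Matrix.det_transpose]
    have hQg : ∀ j, Q ∣ Matrix.cramer M.transpose θ' j := by
      intro j
      rw [hgdet]
      refine Q_dvd_det hforms hdist _ (fun i => ?_)
      rcases eq_or_ne i j with rfl | hij
      · rw [Matrix.updateRow_self]
        exact hθ'
      · rw [Matrix.updateRow_ne hij]
        exact hθ i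
    choose q hq using hQg
    have hCc : MvPolynomial.C c * MvPolynomial.C c⁻¹ = (1 : MvPolynomial (Fin n) K) := by
      rw [← MvPolynomial.C_mul, mul_inv_cancel₀ hc, MvPolynomial.C_1]
    set hv : Fin n → MvPolynomial (Fin n) K := fun j => MvPolynomial.C c⁻¹ * q j with hvdef
    have hgh : Matrix.cramer M.transpose θ' = M.det • hv := by
      funext j
      rw [Pi.smul_apply, hvdef, smul_eq_mul, hq j, hr, hrC]
      calc Q * q j = Q * 1 * q j := by rw [mul_one]
        _ = Q * (MvPolynomial.C c * MvPolynomial.C c⁻¹) * q j := by rw [hCc]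
        _ = Q * MvPolynomial.C c * (MvPolynomial.C c⁻¹ * q j) := by ring
    have hm := Matrix.mulVec_cramer M.transpose θ'
    rw [hgh, Matrix.mulVec_smul, Matrix.det_transpose] at hm
    have hmv : M.transpose.mulVec hv = θ' := by
      funext j
      have := congr_fun hm j
      simp only [Pi.smul_apply, smul_eq_mul] at this
      exact mul_left_cancel₀ hdet0 this
    have hθ'eq : θ' = ∑ i, hv i • θ i := by
      funext j
      rw [← hmv]
      simp only [Matrix.mulVec, dotProduct, Matrix.transpose_apply,
        Finset.sum_apply, Pi.smul_apply, smul_eq_mul]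
      exact Finset.sum_congr rfl (fun i _ => mul_comm _ _)
    rw [hθ'eq]
    exact Submodule.sum_mem _ (fun i _ =>
      Submodule.smul_mem _ _ (Submodule.subset_span ⟨i, rfl⟩))
  have hbasis : IsBasisOf θ (Dmod A μ) :=
    ⟨hθ, hind, le_antisymm
      (Submodule.span_le.mpr (Set.range_subset_iff.mpr hθ))
      (fun θ' hθ' => hspan θ' hθ')⟩
  exact ⟨hbasis, θ, hbasis, hhom⟩
end

section
/- Let A be an arrangement in K^ℓ, H_0 = ker(α_0) ∈ A, m_0 ≥ 1, and let δ be the multiplicity concentrated at H_0 with value m_0. Let Ann(H_0) = {θ ∈ D(A, δ) : θ(α_0) = 0} and θ_δ = α_0^{m_0−1} θ_E, where θ_E is the Euler derivation. Then θ_δ ∈ D(A, δ) and D(A, δ) = S θ_δ ⊕ Ann(H_0) as a direct sum of S-modules. -/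
open MvPolynomial

open scoped Classical

lemma euler_monomial {K : Type*} [CommRing K] {n : ℕ} (s : Fin n →₀ ℕ) (c : K) :
    ∑ i : Fin n, X i * pderiv i (monomial s c) = (∑ i : Fin n, s i) • monomial s c := by
  rw [Finset.sum_smul]
  refine Finset.sum_congr rfl fun i _ => ?_
  rw [pderiv_monomial]
  rcases Nat.eq_zero_or_pos (s i) with h | h
  · simp [h]
  · rw [X, monomial_mul, one_mul]
    have hs : Finsupp.single i 1 + (s - Finsupp.single i 1) = s := by
      ext j
      rcases eq_or_ne j i with rfl | hj
      · simp [Finsupp.single_apply]; omega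
      · simp [Finsupp.single_apply, Ne.symm hj, Finsupp.sub_apply]
    rw [hs, smul_monomial, nsmul_eq_mul, mul_comm]

lemma euler_deg_one {K : Type*} [CommRing K] {n : ℕ} {f : MvPolynomial (Fin n) K}
    (hf : f.IsHomogeneous 1) : ∑ i, X i * pderiv i f = f := by
  conv_rhs => rw [f.as_sum]
  have step : ∀ i : Fin n, X i * pderiv i f
      = ∑ s ∈ f.support, X i * pderiv i (monomial s (coeff s f)) := fun i => by
    rw [← Finset.mul_sum, ← map_sum, ← f.as_sum]
  rw [Finset.sum_congr rfl fun i _ => step i, Finset.sum_comm]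
  refine Finset.sum_congr rfl fun s hs => ?_
  rw [euler_monomial]
  have hw : (∑ i : Fin n, s i) = 1 := by
    have := hf (mem_support_iff.mp hs)
    rw [← this, Finsupp.weight_apply, Finsupp.sum_fintype]
    · simp
    · simp
  rw [hw, one_smul]

/-- Let `δ` be the multiplicity concentrated at `H₀ = ker α₀` with value `m₀`,
`θ_E` the Euler derivation and `θ_δ = α₀^(m₀-1) θ_E`. Then `θ_δ ∈ D(A, δ)` and
`D(A, δ) = S·θ_δ ⊕ Ann(H₀)`, where `Ann(H₀) = {θ ∈ D(A,δ) : θ(α₀) = 0}`. -/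
theorem concentrated_multiplicity_decomposition
    {K : Type*} [Field K] [CharZero K] {n : ℕ}
    (A : Finset (MvPolynomial (Fin (n + 1)) K))
    (hforms : ∀ α ∈ A, α.IsHomogeneous 1 ∧ α ≠ 0)
    (hdist : ∀ α ∈ A, ∀ β ∈ A, kerV α = kerV β → α = β)
    (α₀ : MvPolynomial (Fin (n + 1)) K) (hα₀ : α₀ ∈ A)
    (m₀ : ℕ) (hm₀ : 1 ≤ m₀)
    (δ : MvPolynomial (Fin (n + 1)) K → ℕ)
    (hδ : δ = fun α => if α = α₀ then m₀ else 1)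
    (θδ : MvDer (n + 1) K)
    (hθδ : θδ = fun i => α₀ ^ (m₀ - 1) * MvPolynomial.X i)
    (Ann : Submodule (MvPolynomial (Fin (n + 1)) K) (MvDer (n + 1) K))
    (hAnn : Ann = Dmod A δ ⊓ LinearMap.ker (derAppL α₀)) :
    θδ ∈ Dmod A δ ∧
      Submodule.span (MvPolynomial (Fin (n + 1)) K) {θδ} ⊔ Ann = Dmod A δ ∧
      Submodule.span (MvPolynomial (Fin (n + 1)) K) {θδ} ⊓ Ann = ⊥ := by
  have hmem : ∀ θ : MvDer (n + 1) K,
      θ ∈ Dmod A δ ↔ ∀ α ∈ A, derAppL α θ ∈ Ideal.span {α ^ δ α} := by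
    intro θ
    simp [Dmod, Submodule.mem_iInf, Submodule.mem_comap]
  have hval : ∀ α : MvPolynomial (Fin (n + 1)) K, α.IsHomogeneous 1 →
      derAppL α θδ = α₀ ^ (m₀ - 1) * α := by
    intro α hα
    show (∑ i, θδ i * pderiv i α) = _
    rw [hθδ]
    simp_rw [mul_assoc]
    rw [← Finset.mul_sum, euler_deg_one hα]
  have hα₀ne : α₀ ≠ 0 := (hforms α₀ hα₀).2
  have hpow : α₀ ^ (m₀ - 1) * α₀ = α₀ ^ m₀ := by
    rw [← pow_succ, Nat.sub_add_cancel hm₀]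
  have part1 : θδ ∈ Dmod A δ := by
    rw [hmem]
    intro α hα
    rw [hval α (hforms α hα).1, Ideal.mem_span_singleton, hδ]
    by_cases h : α = α₀
    · subst h
      rw [hpow]
      simp
    · simp only [if_neg h, pow_one]
      exact dvd_mul_left α _
  refine ⟨part1, ?_, ?_⟩
  · refine le_antisymm (sup_le ?_ ?_) ?_
    · rw [Submodule.span_le, Set.singleton_subset_iff]; exact part1
    · rw [hAnn]; exact inf_le_left
    · intro θ hθ
      have h0 : derAppL α₀ θ ∈ Ideal.span {α₀ ^ m₀} := by
        have := (hmem θ).1 hθ α₀ hα₀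
        rw [hδ] at this
        simpa using this
      rw [Ideal.mem_span_singleton] at h0
      obtain ⟨f, hf⟩ := h0
      refine Submodule.mem_sup.2 ⟨f • θδ,
        Submodule.smul_mem _ _ (Submodule.mem_span_singleton_self θδ),
        θ - f • θδ, ?_, by abel⟩
      rw [hAnn]
      refine ⟨Submodule.sub_mem _ hθ (Submodule.smul_mem _ _ part1), ?_⟩
      show derAppL α₀ (θ - f • θδ) = 0
      rw [map_sub, map_smul, hval α₀ (hforms α₀ hα₀).1,
        smul_eq_mul, hf, mul_comm (α₀ ^ (m₀ - 1)) α₀, ← pow_succ',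
        Nat.sub_add_cancel hm₀]
      ring
  · rw [eq_bot_iff]
    rintro θ ⟨h1, h2⟩
    obtain ⟨f, hf⟩ := Submodule.mem_span_singleton.1 h1
    rw [hAnn] at h2
    have h3 : derAppL α₀ θ = 0 := LinearMap.mem_ker.1 h2.2
    rw [← hf, map_smul, hval α₀ (hforms α₀ hα₀).1, smul_eq_mul, hpow] at h3
    have hfz : f = 0 := by
      rcases mul_eq_zero.1 h3 with h | h
      · exact h
      · exact absurd h (pow_ne_zero _ hα₀ne)
    rw [Submodule.mem_bot, ← hf, hfz, zero_smul]
end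

section
/- Let A be the reflection arrangement of the full monomial group G(r,1,ℓ) in ℂ^ℓ, i.e. the arrangement with defining polynomial x_1 ⋯ x_ℓ · ∏_{i<j} ∏_{k=0}^{r−1} (x_i − ζ^k x_j), where ζ is a primitive r-th root of unity. Then A is free with exponents {1, r+1, 2r+1, ..., (ℓ−1)r+1}. -/
open MvPolynomial

open scoped Classical

noncomputable section MonFreeAux


lemma primeXmv (ℓ : ℕ) (i : Fin ℓ) : Prime (X i : MvPolynomial (Fin ℓ) ℂ) := by
  rw [← MulEquiv.prime_iff (renameEquiv ℂ (Equiv.optionSubtypeNe i).symm).toMulEquiv]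
  have h1 : (renameEquiv ℂ (Equiv.optionSubtypeNe i).symm).toMulEquiv (X i)
      = X (none : Option {b : Fin ℓ // b ≠ i}) := by
    simp [renameEquiv, rename_X]
  rw [h1, ← MulEquiv.prime_iff (optionEquivLeft ℂ {b : Fin ℓ // b ≠ i}).toMulEquiv]
  have h2 : (optionEquivLeft ℂ {b : Fin ℓ // b ≠ i}).toMulEquiv (X none) = Polynomial.X :=
    optionEquivLeft_X_none ..
  rw [h2]
  exact Polynomial.prime_X

lemma primeSub (ℓ : ℕ) (a b : Fin ℓ) (hab : a ≠ b) (u : ℂ) :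
    Prime (X a - C u * X b : MvPolynomial (Fin ℓ) ℂ) := by
  set g : Fin ℓ → MvPolynomial (Fin ℓ) ℂ :=
    fun j => if j = a then X a + C u * X b else X j with hg
  set g' : Fin ℓ → MvPolynomial (Fin ℓ) ℂ :=
    fun j => if j = a then X a - C u * X b else X j with hg'
  have hinv : ∀ p : MvPolynomial (Fin ℓ) ℂ, aeval g' (aeval g p) = p := by
    intro p
    have H : (aeval g').comp (aeval g) = AlgHom.id ℂ (MvPolynomial (Fin ℓ) ℂ) := by
      apply algHom_ext
      intro j
      by_cases hj : j = a
      · subst hj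
        simp [hg, hg', if_neg (Ne.symm hab)]
      · simp [hg, hg', hj]
    calc aeval g' (aeval g p) = ((aeval g').comp (aeval g)) p := rfl
      _ = p := by rw [H]; rfl
  have key : (aeval g : MvPolynomial (Fin ℓ) ℂ →ₐ[ℂ] MvPolynomial (Fin ℓ) ℂ)
      (X a - C u * X b) = X a := by
    simp [hg, if_neg (Ne.symm hab), algebraMap_eq]
  have hp := primeXmv ℓ a
  rw [← key] at hp
  exact comap_prime (aeval g) (aeval g') hinv hp

lemma nthroots_image {r : ℕ} (hr : 1 ≤ r) {ζ : ℂ} (hζ : IsPrimitiveRoot ζ r) :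
    Polynomial.nthRootsFinset r (1 : ℂ) = (Finset.range r).image (ζ ^ ·) := by
  symm
  apply Finset.eq_of_subset_of_card_le
  · intro x hx
    simp only [Finset.mem_image, Finset.mem_range] at hx
    obtain ⟨k, _, rfl⟩ := hx
    rw [Polynomial.mem_nthRootsFinset (by omega) (1 : ℂ)]
    rw [← pow_mul, mul_comm, pow_mul, hζ.pow_eq_one, one_pow]
  · rw [hζ.card_nthRootsFinset, Finset.card_image_of_injOn, Finset.card_range]
    intro i hi j hj hij
    exact hζ.pow_inj (Finset.mem_range.mp hi) (Finset.mem_range.mp hj) hij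

lemma complex_prod_identity {r : ℕ} (hr : 1 ≤ r) {ζ : ℂ} (hζ : IsPrimitiveRoot ζ r)
    (c d : ℂ) : ∏ k ∈ Finset.range r, (c - ζ ^ k * d) = c ^ r - d ^ r := by
  have hroot : ∀ t : ℂ, ∏ k ∈ Finset.range r, (t - ζ ^ k) = t ^ r - 1 := by
    intro t
    have h := Polynomial.X_pow_sub_one_eq_prod (R := ℂ) (by omega : 0 < r) hζ
    have h2 := congrArg (Polynomial.eval t) h
    simp only [Polynomial.eval_sub, Polynomial.eval_pow, Polynomial.eval_X, Polynomial.eval_one,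
      Polynomial.eval_prod, Polynomial.eval_C, nthroots_image hr hζ] at h2
    rw [Finset.prod_image (fun i hi j hj =>
      hζ.pow_inj (Finset.mem_range.mp hi) (Finset.mem_range.mp hj))] at h2
    exact h2.symm
  by_cases hd : d = 0
  · simp [hd, Finset.prod_const, zero_pow (by omega : r ≠ 0)]
  · have : ∏ k ∈ Finset.range r, (c - ζ ^ k * d) =
        ∏ k ∈ Finset.range r, (d * (c / d - ζ ^ k)) := by
      apply Finset.prod_congr rfl
      intro k _
      field_simp
    rw [this, Finset.prod_mul_distrib, Finset.prod_const, Finset.card_range, hroot, div_pow]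
    field_simp

lemma mv_prod_identity {ℓ r : ℕ} (hr : 1 ≤ r) {ζ : ℂ} (hζ : IsPrimitiveRoot ζ r)
    (a b : Fin ℓ) :
    ∏ k ∈ Finset.range r, (X a - C (ζ ^ k) * X b : MvPolynomial (Fin ℓ) ℂ)
      = X a ^ r - X b ^ r := by
  apply MvPolynomial.funext
  intro v
  simp only [eval_prod, eval_sub, eval_mul, eval_C, eval_X, eval_pow]
  exact complex_prod_identity hr hζ (v a) (v b)

lemma prod_primes_dvd' {R : Type*} [CommRing R] [IsDomain R] (s : Finset R)
    (hp : ∀ a ∈ s, Prime a) (hnd : ∀ a ∈ s, ∀ b ∈ s, a ≠ b → ¬ a ∣ b)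
    (z : R) (hdvd : ∀ a ∈ s, a ∣ z) : ∏ a ∈ s, a ∣ z := by
  classical
  revert hp hnd hdvd
  induction s using Finset.induction_on with
  | empty => intros; simpa using one_dvd z
  | insert a s hnotmem ih =>
    intro hp hnd hdvd
    have hds : ∏ b ∈ s, b ∣ z := ih
      (fun b hb => hp b (Finset.mem_insert_of_mem hb))
      (fun b hb c hc => hnd b (Finset.mem_insert_of_mem hb) c (Finset.mem_insert_of_mem hc))
      (fun b hb => hdvd b (Finset.mem_insert_of_mem hb))
    obtain ⟨m, hm⟩ := hds
    have hpa : Prime a := hp a (Finset.mem_insert_self a s)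
    have hadvd : a ∣ (∏ b ∈ s, b) * m := hm ▸ hdvd a (Finset.mem_insert_self a s)
    have hanp : ¬ a ∣ ∏ b ∈ s, b := by
      rw [Prime.dvd_finset_prod_iff hpa]
      rintro ⟨b, hb, hab⟩
      exact hnd a (Finset.mem_insert_self a s) b (Finset.mem_insert_of_mem hb)
        (fun h => hnotmem (h ▸ hb)) hab
    have ham : a ∣ m := (hpa.dvd_or_dvd hadvd).resolve_left hanp
    obtain ⟨m', rfl⟩ := ham
    rw [Finset.prod_insert hnotmem, hm]
    exact ⟨m', by ring⟩

lemma saito_dvd {ℓ : ℕ} (P : Matrix (Fin ℓ) (Fin ℓ) (MvPolynomial (Fin ℓ) ℂ))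
    (α : MvPolynomial (Fin ℓ) ℂ) (coefs : Fin ℓ → ℂ) (i0 : Fin ℓ) (h0 : coefs i0 ≠ 0)
    (hrow : ∀ q, α ∣ ∑ i, C (coefs i) * P i q) : α ∣ P.det := by
  have hv : ∀ q, ∃ w : MvPolynomial (Fin ℓ) ℂ,
      (∑ k, (C (coefs k) : MvPolynomial (Fin ℓ) ℂ) • P k) q = α * w := by
    intro q
    obtain ⟨w, hw⟩ := hrow q
    refine ⟨w, ?_⟩
    rw [Finset.sum_apply]
    simpa [smul_eq_mul] using hw
  choose w hw using hv
  have hrw : (∑ k, (C (coefs k) : MvPolynomial (Fin ℓ) ℂ) • P k) = α • w := funext fun q => by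
    rw [hw q]; rfl
  have h1 := Matrix.det_updateRow_sum P i0 (fun k => (C (coefs k) : MvPolynomial (Fin ℓ) ℂ))
  rw [hrw, Matrix.det_updateRow_smul] at h1
  have h2 : P.det = C (coefs i0)⁻¹ * (α * (P.updateRow i0 w).det) := by
    rw [h1, smul_eq_mul, ← mul_assoc, ← C_mul, inv_mul_cancel₀ h0, C_1, one_mul]
  rw [h2]
  exact Dvd.dvd.mul_left (Dvd.intro _ rfl) _

lemma detB_eq (ℓ r : ℕ) :
    (Matrix.of fun p i : Fin ℓ => (X i : MvPolynomial (Fin ℓ) ℂ) ^ ((p : ℕ) * r + 1)).det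
      = (∏ i : Fin ℓ, ∏ j ∈ Finset.Ioi i,
          ((X j : MvPolynomial (Fin ℓ) ℂ) ^ r - X i ^ r)) * ∏ i : Fin ℓ, X i := by
  have hB : (Matrix.of fun p i : Fin ℓ => (X i : MvPolynomial (Fin ℓ) ℂ) ^ ((p : ℕ) * r + 1))
      = Matrix.transpose (Matrix.vandermonde fun i : Fin ℓ => (X i : MvPolynomial (Fin ℓ) ℂ) ^ r)
        * Matrix.diagonal (fun i : Fin ℓ => (X i : MvPolynomial (Fin ℓ) ℂ)) := by
    ext p i
    rw [Matrix.mul_diagonal]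
    simp only [Matrix.of_apply, Matrix.transpose_apply, Matrix.vandermonde]
    rw [pow_add, pow_one, mul_comm ((p : ℕ)) r, pow_mul]
  rw [hB, Matrix.det_mul, Matrix.det_transpose, Matrix.det_vandermonde, Matrix.det_diagonal]

lemma not_dvd_of_eval {ℓ : ℕ} {α β : MvPolynomial (Fin ℓ) ℂ} (v : Fin ℓ → ℂ)
    (h0 : eval v α = 0) (h1 : eval v β ≠ 0) : ¬ α ∣ β := by
  rintro ⟨c, rfl⟩
  rw [eval_mul, h0, zero_mul] at h1
  exact h1 rfl




lemma nd1 {ℓ : ℕ} {i j : Fin ℓ} (h : i ≠ j) :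
    ¬ (X i : MvPolynomial (Fin ℓ) ℂ) ∣ X j :=
  not_dvd_of_eval (Pi.single j 1) (by simp [Pi.single_apply, h]) (by simp)

lemma nd2 {ℓ : ℕ} {i a b : Fin ℓ} (hab : a < b) {u : ℂ} (hu : u ≠ 0) :
    ¬ (X i : MvPolynomial (Fin ℓ) ℂ) ∣ (X a - C u * X b) := by
  by_cases hia : i = a
  · subst hia
    exact not_dvd_of_eval (Pi.single b 1)
      (by simp [Pi.single_apply, ne_of_lt hab])
      (by simp [Pi.single_apply, ne_of_lt hab, hu])
  · exact not_dvd_of_eval (Pi.single a 1)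
      (by simp [Pi.single_apply, hia])
      (by simp [Pi.single_apply, (ne_of_lt hab).symm])

lemma nd3 {ℓ : ℕ} {j a b : Fin ℓ} (hab : a < b) {u : ℂ} (hu : u ≠ 0) :
    ¬ (X a - C u * X b : MvPolynomial (Fin ℓ) ℂ) ∣ X j := by
  refine not_dvd_of_eval (fun t => if t = a then u else 1) ?_ ?_
  · simp [(ne_of_lt hab).symm]
  · by_cases hj : j = a <;> simp [hj, hu]

lemma nd4 {ℓ : ℕ} {a b a' b' : Fin ℓ} (hab : a < b) (hab' : a' < b')
    {u u' : ℂ} (hu : u ≠ 0) (hu' : u' ≠ 0)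
    (hne : (X a - C u * X b : MvPolynomial (Fin ℓ) ℂ) ≠ (X a' - C u' * X b')) :
    ¬ (X a - C u * X b : MvPolynomial (Fin ℓ) ℂ) ∣ (X a' - C u' * X b') := by
  have hba : b ≠ a := (ne_of_lt hab).symm
  set v : Fin ℓ → ℂ := fun t => if t = a then u else if t = b then 1 else 0 with hv
  have hva : eval v (X a - C u * X b : MvPolynomial (Fin ℓ) ℂ) = 0 := by
    simp [hv, hba]
  by_cases ha : a' = a
  · subst ha
    have hb'a : b' ≠ a' := (ne_of_lt hab').symm
    by_cases hb : b' = b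
    · subst hb
      have huu : u ≠ u' := by
        intro h; exact hne (by rw [h])
      refine not_dvd_of_eval v hva ?_
      simp [hv, hba, hb'a]
      exact sub_ne_zero.mpr huu
    · refine not_dvd_of_eval v hva ?_
      simp [hv, hba, hb'a, hb, hu]
  · by_cases hb : a' = b
    · subst hb
      have hb'b : b' ≠ a' := (ne_of_lt hab').symm
      have h2 : b' ≠ a := by
        intro h
        rw [h] at hab'
        exact absurd (lt_trans hab hab') (lt_irrefl a)
      refine not_dvd_of_eval v hva ?_
      simp [hv, ha, hb'b, h2]
    · -- a' ∉ {a, b}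
      by_cases hb'a : b' = a
      · refine not_dvd_of_eval v hva ?_
        simp [hv, ha, hb, hb'a, hu, hu']
      · by_cases hb'b : b' = b
        · refine not_dvd_of_eval v hva ?_
          simp [hv, ha, hb, hb'a, hb'b, hba, hu']
        · refine not_dvd_of_eval (Pi.single a' 1) ?_ ?_
          · simp [Pi.single_apply, (Ne.symm ha : a ≠ a'), (Ne.symm hb : b ≠ a')]
          · simp [Pi.single_apply, (ne_of_lt hab').symm]



lemma phi_inj {ℓ r : ℕ} {ζ : ℂ} (hζ : IsPrimitiveRoot ζ r) (hz : ζ ≠ 0)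
    {a b a' b' : Fin ℓ} {k k' : ℕ} (hab : a < b) (hab' : a' < b') (hk : k < r) (hk' : k' < r)
    (heq : (X a - C (ζ ^ k) * X b : MvPolynomial (Fin ℓ) ℂ) = X a' - C (ζ ^ k') * X b') :
    a = a' ∧ b = b' ∧ k = k' := by
  have hzk : (ζ : ℂ) ^ k ≠ 0 := pow_ne_zero _ hz
  have hzk' : (ζ : ℂ) ^ k' ≠ 0 := pow_ne_zero _ hz
  have E : ∀ t : Fin ℓ, ((if a = t then (1:ℂ) else 0) - ζ ^ k * (if b = t then 1 else 0))
      = ((if a' = t then (1:ℂ) else 0) - ζ ^ k' * (if b' = t then 1 else 0)) := by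
    intro t
    have h := congrArg (eval (Pi.single t (1:ℂ))) heq
    simpa [Pi.single_apply] using h
  have hba : a ≠ b := ne_of_lt hab
  have hba' : a' ≠ b' := ne_of_lt hab'
  have haa : a = a' := by
    by_contra haa
    have h1 := E a'
    rw [if_neg haa, if_pos rfl, if_neg (Ne.symm hba')] at h1
    -- h1 : 0 - ζ^k * (if b = a' then 1 else 0) = 1 - ζ^k' * 0
    by_cases hba2 : b = a'
    · rw [if_pos hba2] at h1
      -- -ζ^k = 1
      have h2 := E a
      rw [if_pos rfl, if_neg (Ne.symm hba), if_neg (fun h => haa h.symm)] at h2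
      by_cases hb'a : b' = a
      · -- a' = b and b' = a : a' < b' = a < b = a'
        rw [hba2] at hab
        rw [hb'a] at hab'
        exact absurd (lt_trans hab' hab) (lt_irrefl a')
      · rw [if_neg hb'a] at h2
        simp at h2
    · rw [if_neg hba2] at h1
      simp at h1
  subst haa
  refine ⟨rfl, ?_⟩
  have h3 := E b
  rw [if_neg hba, if_pos rfl] at h3
  by_cases hbb : b' = b
  · rw [if_pos hbb] at h3
    simp at h3
    exact ⟨hbb.symm, hζ.pow_inj hk hk' h3⟩
  · rw [if_neg hbb] at h3
    simp [hzk] at h3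

lemma disj12 {ℓ : ℕ} {ζ : ℂ} (hz : ζ ≠ 0) {i a b : Fin ℓ} {k : ℕ} (hab : a < b)
    (heq : (X i : MvPolynomial (Fin ℓ) ℂ) = X a - C (ζ ^ k) * X b) : False := by
  have hba : b ≠ a := (ne_of_lt hab).symm
  by_cases hia : i = a
  · have h := congrArg (eval (Pi.single b (1:ℂ))) heq
    simp [Pi.single_apply, hia, ne_of_lt hab, hba] at h
    exact hz h.1
  · have h := congrArg (eval (Pi.single a (1:ℂ))) heq
    simp [Pi.single_apply, hia, hba] at h

lemma Xinj {ℓ : ℕ} {i j : Fin ℓ} (heq : (X i : MvPolynomial (Fin ℓ) ℂ) = X j) : i = j := by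
  by_contra h
  have h2 := congrArg (eval (Pi.single i (1:ℂ))) heq
  simp only [eval_X, Pi.single_apply, if_pos rfl] at h2
  rw [if_neg (fun hh : j = i => h hh.symm)] at h2
  exact one_ne_zero h2


end MonFreeAux

/-- The reflection arrangement of the full monomial group `G(r,1,ℓ)` in `ℂ^ℓ`,
with hyperplanes `ker x_i` and `ker (x_i - ζ^k x_j)` for `i < j`, `0 ≤ k < r`,
is free with exponents `{1, r+1, 2r+1, ..., (ℓ-1)r+1}`. -/
theorem monomial_reflection_arrangement_free
    (ℓ r : ℕ) (hr : 1 ≤ r) (ζ : ℂ) (hζ : IsPrimitiveRoot ζ r)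
    (A : Finset (MvPolynomial (Fin ℓ) ℂ))
    (hA : A =
      (Finset.univ.image fun i : Fin ℓ => (MvPolynomial.X i : MvPolynomial (Fin ℓ) ℂ)) ∪
      ((((Finset.univ : Finset (Fin ℓ × Fin ℓ)).filter fun p => p.1 < p.2) ×ˢ
          Finset.range r).image fun q =>
        MvPolynomial.X q.1.1 - MvPolynomial.C (ζ ^ q.2) * MvPolynomial.X q.1.2)) :
    FreeWithExps (Dmod A fun _ => 1) (fun i : Fin ℓ => (i : ℕ) * r + 1) := by
  classical
  have hz : ζ ≠ 0 := hζ.ne_zero (by omega)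
  set pairs : Finset (Fin ℓ × Fin ℓ) := Finset.univ.filter (fun p => p.1 < p.2) with hpairs
  -- membership characterization
  have memA : ∀ α : MvPolynomial (Fin ℓ) ℂ, α ∈ A ↔
      ((∃ i, α = X i) ∨ ∃ a b : Fin ℓ, ∃ k : ℕ, a < b ∧ k < r ∧ α = X a - C (ζ ^ k) * X b) := by
    intro α
    rw [hA, Finset.mem_union]
    constructor
    · rintro (h | h)
      · obtain ⟨i, _, rfl⟩ := Finset.mem_image.mp h
        exact Or.inl ⟨i, rfl⟩
      · obtain ⟨q, hq, rfl⟩ := Finset.mem_image.mp h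
        obtain ⟨hq1, hq2⟩ := Finset.mem_product.mp hq
        exact Or.inr ⟨q.1.1, q.1.2, q.2, (Finset.mem_filter.mp hq1).2,
          Finset.mem_range.mp hq2, rfl⟩
    · rintro (⟨i, rfl⟩ | ⟨a, b, k, h1, h2, rfl⟩)
      · exact Or.inl (Finset.mem_image.mpr ⟨i, Finset.mem_univ _, rfl⟩)
      · exact Or.inr (Finset.mem_image.mpr ⟨((a, b), k),
          Finset.mem_product.mpr ⟨Finset.mem_filter.mpr ⟨Finset.mem_univ _, h1⟩,
            Finset.mem_range.mpr h2⟩, rfl⟩)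
  have hprime : ∀ α ∈ A, Prime α := by
    intro α hα
    rcases (memA α).1 hα with ⟨i, rfl⟩ | ⟨a, b, k, h1, h2, rfl⟩
    · exact primeXmv ℓ i
    · exact primeSub ℓ a b (ne_of_lt h1) _
  have hnd : ∀ α ∈ A, ∀ β ∈ A, α ≠ β → ¬ α ∣ β := by
    intro α hα β hβ hne
    rcases (memA α).1 hα with ⟨i, rfl⟩ | ⟨a, b, k, h1, h2, rfl⟩ <;>
      rcases (memA β).1 hβ with ⟨j, rfl⟩ | ⟨a', b', k', h1', h2', rfl⟩
    · exact nd1 (fun h => hne (by rw [h]))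
    · exact nd2 h1' (pow_ne_zero _ hz)
    · exact nd3 h1 (pow_ne_zero _ hz)
    · exact nd4 h1 h1' (pow_ne_zero _ hz) (pow_ne_zero _ hz) hne
  -- the basis derivations
  set θv : Fin ℓ → MvDer ℓ ℂ := fun p i => X i ^ ((p : ℕ) * r + 1) with hθv
  have memD : ∀ θ : MvDer ℓ ℂ, θ ∈ Dmod A (fun _ => 1) ↔
      ∀ α ∈ A, α ∣ ∑ i, θ i * pderiv i α := by
    intro θ
    simp only [Dmod, Submodule.mem_iInf, Submodule.mem_comap, pow_one,
      Ideal.mem_span_singleton, derAppL, LinearMap.coe_mk, AddHom.coe_mk]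
  have hXsum : ∀ (θ : MvDer ℓ ℂ) (i : Fin ℓ),
      ∑ j, θ j * pderiv j (X i : MvPolynomial (Fin ℓ) ℂ) = θ i := by
    intro θ i
    rw [Finset.sum_eq_single i]
    · simp
    · intro j _ hji
      simp [pderiv_X, Pi.single_apply, if_neg (fun h : i = j => hji h.symm)]
    · simp
  have hSubSum : ∀ (θ : MvDer ℓ ℂ) (a b : Fin ℓ) (u : ℂ),
      ∑ j, θ j * pderiv j (X a - C u * X b : MvPolynomial (Fin ℓ) ℂ)
        = θ a - C u * θ b := by
    intro θ a b u
    have hstep : ∀ j, θ j * pderiv j (X a - C u * X b : MvPolynomial (Fin ℓ) ℂ)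
        = θ j * pderiv j (X a : MvPolynomial (Fin ℓ) ℂ)
          - C u * (θ j * pderiv j (X b : MvPolynomial (Fin ℓ) ℂ)) := by
      intro j
      rw [map_sub, pderiv_C_mul]
      ring
    rw [Finset.sum_congr rfl (fun j _ => hstep j), Finset.sum_sub_distrib,
      ← Finset.mul_sum, hXsum, hXsum]
  have hmemθ : ∀ p, θv p ∈ Dmod A (fun _ => 1) := by
    intro p
    rw [memD]
    intro α hα
    rcases (memA α).1 hα with ⟨i, rfl⟩ | ⟨a, b, k, h1, h2, rfl⟩
    · rw [hXsum]
      exact dvd_pow_self (X i) (Nat.succ_ne_zero _)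
    · rw [hSubSum]
      have hu : (ζ ^ k) ^ ((p : ℕ) * r + 1) = ζ ^ k := by
        rw [← pow_mul, show k * ((p : ℕ) * r + 1) = r * (k * (p : ℕ)) + k by ring,
          pow_add, pow_mul, hζ.pow_eq_one, one_pow, one_mul]
      have hC : (C (ζ ^ k) * X b : MvPolynomial (Fin ℓ) ℂ) ^ ((p : ℕ) * r + 1)
          = C (ζ ^ k) * X b ^ ((p : ℕ) * r + 1) := by
        rw [mul_pow, ← C_pow, hu]
      have := sub_dvd_pow_sub_pow (X a : MvPolynomial (Fin ℓ) ℂ)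
        (C (ζ ^ k) * X b) ((p : ℕ) * r + 1)
      rw [hC] at this
      exact this
  -- the matrix
  set B : Matrix (Fin ℓ) (Fin ℓ) (MvPolynomial (Fin ℓ) ℂ) :=
    Matrix.of (fun p i => X i ^ ((p : ℕ) * r + 1)) with hB
  have hBrow : ∀ p, B p = θv p := fun p => rfl
  -- product over A
  have hA12disj : Disjoint
      (Finset.univ.image fun i : Fin ℓ => (X i : MvPolynomial (Fin ℓ) ℂ))
      ((pairs ×ˢ Finset.range r).image fun q =>
        (X q.1.1 - C (ζ ^ q.2) * X q.1.2 : MvPolynomial (Fin ℓ) ℂ)) := by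
    rw [Finset.disjoint_left]
    intro β h1 h2
    obtain ⟨i, _, rfl⟩ := Finset.mem_image.mp h1
    obtain ⟨q, hq, heq⟩ := Finset.mem_image.mp h2
    obtain ⟨hq1, _⟩ := Finset.mem_product.mp hq
    exact disj12 hz (Finset.mem_filter.mp hq1).2 heq.symm
  have hprodA : ∏ α ∈ A, α = (∏ i, (X i : MvPolynomial (Fin ℓ) ℂ))
      * ∏ pq ∈ pairs, ((X pq.1 : MvPolynomial (Fin ℓ) ℂ) ^ r - X pq.2 ^ r) := by
    rw [hA, Finset.prod_union hA12disj]
    congr 1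
    · rw [Finset.prod_image (fun i _ j _ h => Xinj h)]
    · rw [Finset.prod_image ?inj]
      case inj =>
        intro x hx y hy hxy
        obtain ⟨hx1, hx2⟩ := Finset.mem_product.mp hx
        obtain ⟨hy1, hy2⟩ := Finset.mem_product.mp hy
        obtain ⟨e1, e2, e3⟩ := phi_inj hζ hz (Finset.mem_filter.mp hx1).2
          (Finset.mem_filter.mp hy1).2 (Finset.mem_range.mp hx2)
          (Finset.mem_range.mp hy2) hxy
        exact Prod.ext (Prod.ext e1 e2) e3
      rw [Finset.prod_product' (pairs) (Finset.range r)
        (fun pq k => (X pq.1 - C (ζ ^ k) * X pq.2 : MvPolynomial (Fin ℓ) ℂ))]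
      exact Finset.prod_congr rfl (fun pq _ => mv_prod_identity hr hζ pq.1 pq.2)
  have hIoi : ∏ pq ∈ pairs, ((X pq.2 : MvPolynomial (Fin ℓ) ℂ) ^ r - X pq.1 ^ r)
      = ∏ i, ∏ j ∈ Finset.Ioi i, ((X j : MvPolynomial (Fin ℓ) ℂ) ^ r - X i ^ r) := by
    exact Finset.prod_finset_product' pairs Finset.univ (fun i => Finset.Ioi i)
      (fun p => by simp [hpairs, Finset.mem_Ioi, Finset.mem_filter])
      (f := fun i j => ((X j : MvPolynomial (Fin ℓ) ℂ) ^ r - X i ^ r))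
  have hsign : ∏ pq ∈ pairs, ((X pq.1 : MvPolynomial (Fin ℓ) ℂ) ^ r - X pq.2 ^ r)
      = (-1) ^ pairs.card
        * ∏ pq ∈ pairs, ((X pq.2 : MvPolynomial (Fin ℓ) ℂ) ^ r - X pq.1 ^ r) := by
    rw [← Finset.prod_const (-1 : MvPolynomial (Fin ℓ) ℂ), ← Finset.prod_mul_distrib]
    exact Finset.prod_congr rfl (fun pq _ => by ring)
  have hQdet : ∏ α ∈ A, α = (-1) ^ pairs.card * B.det := by
    rw [hprodA, hsign, hIoi, hB, detB_eq]
    ring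
  have hQne : ∏ α ∈ A, α ≠ 0 :=
    Finset.prod_ne_zero_iff.mpr (fun α hα => (hprime α hα).ne_zero)
  have hdetne : B.det ≠ 0 := by
    intro h
    apply hQne
    rw [hQdet, h, mul_zero]
  -- Saito divisibility for any matrix with rows in D(A)
  have hNdet : ∀ N : Matrix (Fin ℓ) (Fin ℓ) (MvPolynomial (Fin ℓ) ℂ),
      (∀ q, N q ∈ Dmod A (fun _ => 1)) → B.det ∣ N.det := by
    intro N hN
    have hQ : ∏ α ∈ A, α ∣ N.det := by
      apply prod_primes_dvd' A hprime hnd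
      intro α hα
      have hNdvd : ∀ q, α ∣ ∑ i, N q i * pderiv i α :=
        fun q => (memD (N q)).1 (hN q) α hα
      rcases (memA α).1 hα with ⟨i, rfl⟩ | ⟨a, b, k, h1, h2, rfl⟩
      · have hs := saito_dvd (Matrix.transpose N) (X i)
          (fun j => if j = i then 1 else 0) i (by simp) ?hrow
        · rwa [Matrix.det_transpose] at hs
        case hrow =>
          intro q
          have hq := hNdvd q
          rw [hXsum] at hq
          have : ∑ j, C (if j = i then (1 : ℂ) else 0) * Matrix.transpose N j q
              = N q i := by
            rw [Finset.sum_eq_single i]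
            · simp [Matrix.transpose_apply]
            · intro j _ hji
              simp [if_neg hji]
            · simp
          rwa [this]
      · have hs := saito_dvd (Matrix.transpose N) (X a - C (ζ ^ k) * X b)
          (fun j => (if j = a then 1 else 0) - ζ ^ k * (if j = b then 1 else 0)) a
          ?h0 ?hrow
        · rwa [Matrix.det_transpose] at hs
        case h0 => simp [if_neg (ne_of_lt h1)]
        case hrow =>
          intro q
          have hq := hNdvd q
          rw [hSubSum] at hq
          have : ∑ j, C ((if j = a then (1:ℂ) else 0) - ζ ^ k * (if j = b then 1 else 0))
                * Matrix.transpose N j q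
              = N q a - C (ζ ^ k) * N q b := by
            have hsplit : ∀ j, C ((if j = a then (1:ℂ) else 0)
                  - ζ ^ k * (if j = b then 1 else 0)) * Matrix.transpose N j q
                = C (if j = a then (1:ℂ) else 0) * N q j
                  - C (ζ ^ k) * (C (if j = b then (1:ℂ) else 0) * N q j) := by
              intro j
              rw [map_sub, map_mul, Matrix.transpose_apply]
              ring
            rw [Finset.sum_congr rfl (fun j _ => hsplit j), Finset.sum_sub_distrib,
              ← Finset.mul_sum]
            congr 1
            · rw [Finset.sum_eq_single a]
              · simp
              · intro j _ hji; simp [if_neg hji]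
              · simp
            · congr 1
              rw [Finset.sum_eq_single b]
              · simp
              · intro j _ hji; simp [if_neg hji]
              · simp
          rwa [this]
    exact dvd_trans ⟨(-1) ^ pairs.card, by rw [hQdet]; ring⟩ hQ
  refine ⟨θv, ⟨hmemθ, ?_, ?_⟩, ?_⟩
  · -- linear independence
    rw [Fintype.linearIndependent_iff]
    intro c hc p
    have hvec : Matrix.mulVec (Matrix.transpose B) c = 0 := by
      funext i
      have h1 := congrFun hc i
      simp only [Finset.sum_apply, Pi.smul_apply, smul_eq_mul, Pi.zero_apply] at h1
      simp only [Matrix.mulVec, dotProduct, Matrix.transpose_apply, Pi.zero_apply]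
      rw [← h1]
      exact Finset.sum_congr rfl (fun q _ => mul_comm _ _)
    have h2 : Matrix.mulVec (Matrix.adjugate (Matrix.transpose B)) (Matrix.mulVec (Matrix.transpose B) c) = 0 := by
      rw [hvec, Matrix.mulVec_zero]
    rw [Matrix.mulVec_mulVec, Matrix.adjugate_mul, Matrix.det_transpose,
      Matrix.smul_mulVec, Matrix.one_mulVec] at h2
    have h3 := congrFun h2 p
    simp only [Pi.smul_apply, smul_eq_mul, Pi.zero_apply] at h3
    exact (mul_eq_zero.mp h3).resolve_left hdetne
  · -- span
    apply le_antisymm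
    · rw [Submodule.span_le]
      rintro _ ⟨p, rfl⟩
      exact hmemθ p
    · intro θ hθ
      have hrows : ∀ p q, (B.updateRow p θ) q ∈ Dmod A (fun _ => 1) := by
        intro p q
        by_cases hqp : q = p
        · subst hqp
          rw [Matrix.updateRow_self]
          exact hθ
        · rw [Matrix.updateRow_ne hqp]
          exact hmemθ q
      have hdvdp : ∀ p, ∃ f, ((B.updateRow p θ).det) = B.det * f := by
        intro p
        exact hNdet (B.updateRow p θ) (hrows p)
      choose f hf using hdvdp
      have hcram := Matrix.mulVec_cramer (Matrix.transpose B) θ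
      have hcrap : ∀ p, Matrix.cramer (Matrix.transpose B) θ p = B.det * f p := by
        intro p
        rw [Matrix.cramer_apply, Matrix.updateCol_transpose, Matrix.det_transpose, hf p]
      have hkey : ∀ i, θ i = ∑ p, f p * θv p i := by
        intro i
        have h3 := congrFun hcram i
        simp only [Matrix.mulVec, dotProduct, Matrix.transpose_apply,
          Pi.smul_apply, smul_eq_mul, Matrix.det_transpose] at h3
        rw [Finset.sum_congr rfl (fun p _ => by rw [hcrap p])] at h3
        apply mul_left_cancel₀ hdetne
        rw [← h3, Finset.mul_sum]
        exact Finset.sum_congr rfl (fun p _ => by rw [hBrow]; ring)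
      have hθeq : θ = ∑ p, f p • θv p := by
        funext i
        rw [Finset.sum_apply]
        simp only [Pi.smul_apply, smul_eq_mul]
        exact hkey i
      rw [hθeq]
      exact Submodule.sum_mem _ (fun p _ =>
        Submodule.smul_mem _ _ (Submodule.subset_span ⟨p, rfl⟩))
  · intro p i
    exact isHomogeneous_X_pow i ((p : ℕ) * r + 1)
end

section
/- Let A be the rank-3 multiarrangement in ℂ^3 with defining polynomial Q = x_1^{r−1} (x_1^r − x_2^r)^2 (x_1^r − x_3^r)^2 (x_2^r − x_3^r), for r ≥ 2. Then (A, μ) is free with exponents {r+1, 2r+1, 3(r−1)}. -/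
open MvPolynomial

open scoped Classical

open MvPolynomial

noncomputable section
namespace Grr4Aux
open Finset

abbrev S3 := MvPolynomial (Fin 3) ℂ

lemma not_dvd_of_eval {α β : S3} (v : Fin 3 → ℂ) (h0 : eval v α = 0) (h1 : eval v β ≠ 0) :
    ¬ α ∣ β := by
  rintro ⟨g, rfl⟩
  simp [h0] at h1

lemma prime_linear (i j : Fin 3) (hij : i ≠ j) (c : ℂ) :
    Prime (X i - C c * X j : S3) := by
  set α : S3 := X i - C c * X j with hα
  set φ : S3 →+* S3 := (aeval (Function.update X i (C c * X j))).toRingHom with hφ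
  have hφX : ∀ k, φ (X k) = if k = i then C c * X j else X k := by
    intro k
    by_cases h : k = i <;> simp [hφ, h, Function.update]
  have hφC : ∀ a : ℂ, φ (C a) = C a := by intro a; simp [hφ]
  have hsub : ∀ f : S3, α ∣ f - φ f := by
    intro f
    induction f using MvPolynomial.induction_on with
    | C a => simp [hφC]
    | add p q hp hq =>
        have : p + q - φ (p + q) = (p - φ p) + (q - φ q) := by rw [map_add]; ring
        rw [this]; exact dvd_add hp hq
    | mul_X p k hp =>
        have : p * X k - φ (p * X k) = (p - φ p) * X k + φ p * (X k - φ (X k)) := by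
          rw [map_mul]; ring
        rw [this]
        refine dvd_add (hp.mul_right _) ?_
        rw [hφX k]
        by_cases h : k = i
        · subst h; simp only [if_pos rfl]; exact Dvd.dvd.mul_left dvd_rfl _
        · simp [h]
  have heval : ∀ (f : S3) (v : Fin 3 → ℂ),
      eval v (φ f) = eval (Function.update v i (c * v j)) f := by
    intro f v
    have : (eval v).comp φ = eval (Function.update v i (c * v j)) := by
      apply MvPolynomial.ringHom_ext
      · intro a; simp [hφC]
      · intro k
        simp only [RingHom.comp_apply, hφX, eval_X]
        by_cases h : k = i
        · subst h; simp [Function.update_self, hij.symm]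
        · simp [h, Function.update_of_ne h]
    exact DFunLike.congr_fun this f
  have hkill : ∀ f : S3, α ∣ φ f → φ f = 0 := by
    rintro f ⟨g, hg⟩
    apply MvPolynomial.funext
    intro v
    set w := Function.update v i (c * v j) with hw
    have hwj : w j = v j := Function.update_of_ne hij.symm _ _
    have hwi : w i = c * v j := Function.update_self _ _ _
    have hwfix : Function.update w i (c * w j) = w := by
      funext k
      by_cases h : k = i
      · subst h
        rw [Function.update_self, hwj, hwi]
      · rw [Function.update_of_ne h]
    have hevalα : eval w α = 0 := by
      have : eval w α = w i - c * w j := by simp [hα]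
      rw [this, hwi, hwj]; ring
    have h1 : eval v (φ f) = eval w f := heval f v
    have h2 : eval w (φ f) = eval w f := by rw [heval f w, hwfix]
    have h3 : eval w (φ f) = 0 := by rw [hg, map_mul, hevalα, zero_mul]
    rw [map_zero, h1, ← h2, h3]
  refine ⟨?_, ?_, ?_⟩
  · intro h
    have := congrArg (eval (Pi.single i 1)) h
    simp [hα, Pi.single_apply, hij.symm] at this
  · intro h
    have hd : α ∣ (1 : S3) := h.dvd
    have : (1 : S3) = 0 := by
      have := hkill 1 (by rwa [map_one])
      rwa [map_one] at this
    exact one_ne_zero this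
  · intro a b hab
    have h1 : α ∣ φ a * φ b := by
      have h2 : φ a * φ b = a * b - ((a - φ a) * b + φ a * (b - φ b)) := by ring
      rw [h2]
      exact dvd_sub hab (dvd_add ((hsub a).mul_right b) ((hsub b).mul_left (φ a)))
    have h0 : φ a * φ b = 0 := by
      have := hkill (a * b) (by rwa [map_mul])
      rwa [map_mul] at this
    rcases mul_eq_zero.mp h0 with h | h
    · left; have := hsub a; rwa [h, sub_zero] at this
    · right; have := hsub b; rwa [h, sub_zero] at this

lemma key1 {R : Type*} [CommRing R] (a b : R) :
    ∀ n : ℕ, (a - b) ^ 2 ∣ (n : R) * a ^ (n + 1) - ((n : R) + 1) * a ^ n * b + b ^ (n + 1)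
  | 0 => by
      have : ((0:ℕ) : R) * a ^ 1 - (((0:ℕ) : R) + 1) * a ^ 0 * b + b ^ 1 = 0 := by
        push_cast; ring
      rw [this]
      exact dvd_zero _
  | (n + 1) => by
      have ih := key1 a b n
      have h2 : (a - b) ^ 2 ∣ (a - b) * (a ^ (n + 1) - b ^ (n + 1)) := by
        rw [sq]
        exact mul_dvd_mul dvd_rfl (sub_dvd_pow_sub_pow a b (n + 1))
      have h3 := dvd_add (ih.mul_left a) h2
      have h4 : a * ((n : R) * a ^ (n + 1) - ((n : R) + 1) * a ^ n * b + b ^ (n + 1)) +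
          (a - b) * (a ^ (n + 1) - b ^ (n + 1)) =
          ((n + 1 : ℕ) : R) * a ^ (n + 1 + 1) - (((n + 1 : ℕ) : R) + 1) * a ^ (n + 1) * b
            + b ^ (n + 1 + 1) := by
        push_cast; ring
      rwa [h4] at h3

lemma prod_pow_dvd {ι : Type*} [DecidableEq ι] (s : Finset ι) (p : ι → S3) (e : ι → ℕ)
    (hp : ∀ i ∈ s, Prime (p i))
    (hnd : ∀ i ∈ s, ∀ j ∈ s, i ≠ j → ¬ p i ∣ p j) :
    ∀ n : S3, (∀ i ∈ s, p i ^ e i ∣ n) → (∏ i ∈ s, p i ^ e i) ∣ n := by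
  classical
  induction s using Finset.induction_on with
  | empty => intro n _; simp
  | @insert a s' ha ih =>
      intro n h
      obtain ⟨t, ht⟩ := h a (mem_insert_self a s')
      rw [prod_insert ha, ht]
      refine mul_dvd_mul_left _ ?_
      refine ih (fun i hi => hp i (mem_insert_of_mem hi))
        (fun i hi j hj hij => hnd i (mem_insert_of_mem hi) j (mem_insert_of_mem hj) hij)
        t (fun i hi => ?_)
      have hia : i ≠ a := by rintro rfl; exact ha hi
      have hdvd : p i ^ e i ∣ p a ^ e a * t := ht ▸ h i (mem_insert_of_mem hi)
      refine (hp i (mem_insert_of_mem hi)).pow_dvd_of_dvd_mul_left _ ?_ hdvd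
      intro hpa
      exact hnd i (mem_insert_of_mem hi) a (mem_insert_self a s') hia
        ((hp i (mem_insert_of_mem hi)).dvd_of_dvd_pow hpa)

lemma derApp_X (θ : MvDer 3 ℂ) (a : Fin 3) :
    ∑ i, θ i * pderiv i (X a) = θ a := by
  fin_cases a <;>
    simp [Fin.sum_univ_three, pderiv_X, Pi.single_apply]

lemma derApp_lin (θ : MvDer 3 ℂ) (a b : Fin 3) (hab : a ≠ b) (c : ℂ) :
    ∑ i, θ i * pderiv i (X a - C c * X b) = θ a - C c * θ b := by
  fin_cases a <;> fin_cases b <;>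
    simp_all [Fin.sum_univ_three, pderiv_X, Pi.single_apply, map_sub] <;>
    ring

section Roots

variable {m : ℕ} {ζ : ℂ}

lemma hc_pow (hζ : IsPrimitiveRoot ζ (m+2)) (k : ℕ) : (C (ζ^k) : S3)^(m+2) = 1 := by
  rw [← map_pow, ← pow_mul, mul_comm k (m+2), pow_mul, hζ.pow_eq_one, one_pow, map_one]

lemma zk_ne_zero (hζ : IsPrimitiveRoot ζ (m+2)) (k : ℕ) : ζ^k ≠ 0 :=
  pow_ne_zero k (hζ.ne_zero (by omega))

lemma prodid (hζ : IsPrimitiveRoot ζ (m+2)) (a b : S3) :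
    ∏ k ∈ Finset.range (m+2), (a - C (ζ^k) * b) = a^(m+2) - b^(m+2) := by
  have hCζ : IsPrimitiveRoot (C ζ : S3) (m+2) :=
    hζ.map_of_injective (C_injective _ _)
  have h0 : 0 < m + 2 := by omega
  have hinj : Set.InjOn (fun k => (C ζ : S3)^k) ↑(Finset.range (m+2)) := by
    intro k hk l hl h
    exact hCζ.pow_inj (Finset.mem_range.mp hk) (Finset.mem_range.mp hl) h
  have himg : Finset.image (fun k => (C ζ : S3)^k) (Finset.range (m+2)) =
      Polynomial.nthRootsFinset (m+2) (1:S3) := by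
    apply Finset.eq_of_subset_of_card_le
    · intro x hx
      obtain ⟨k, hk, rfl⟩ := Finset.mem_image.mp hx
      rw [Polynomial.mem_nthRootsFinset h0, ← pow_mul, mul_comm k (m+2), pow_mul,
        hCζ.pow_eq_one, one_pow]
    · rw [hCζ.card_nthRootsFinset, Finset.card_image_of_injOn hinj, Finset.card_range]
  rw [IsPrimitiveRoot.pow_sub_pow_eq_prod_sub_mul a b h0 hCζ, ← himg,
    Finset.prod_image hinj]
  refine Finset.prod_congr rfl fun k _ => ?_
  rw [map_pow]

end Roots

/-- First basis derivation, degree `m+3 = r+1`. -/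
def th1 (m : ℕ) : MvDer 3 ℂ :=
  ![((m:S3)+2) * X 0^(m+3),
    ((m:S3)+3) * X 0^(m+2) * X 1 - X 1^(m+3),
    ((m:S3)+3) * X 0^(m+2) * X 2 - X 2^(m+3)]

/-- Second basis derivation, degree `2m+5 = 2r+1`. -/
def th2 (m : ℕ) : MvDer 3 ℂ :=
  ![0,
    X 1 * (X 0^(m+2) - X 1^(m+2))^2,
    X 2 * (X 0^(m+2) - X 2^(m+2))^2]

/-- Third basis derivation, degree `3m+3 = 3(r-1)`. -/
def th3 (m : ℕ) : MvDer 3 ℂ :=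
  ![((m:S3)+2) * X 0^(m+1) * X 1^(m+1) * X 2^(m+1),
    X 0^m * X 2^(m+1) * (X 0^(m+2) + ((m:S3)+1) * X 1^(m+2)),
    X 0^m * X 1^(m+1) * (X 0^(m+2) + ((m:S3)+1) * X 2^(m+2))]

/-- The conditions defining `D(A,μ)`, in explicit divisibility form. -/
def InD (m : ℕ) (ζ : ℂ) (θ : MvDer 3 ℂ) : Prop :=
  ((X 0:S3)^(m+1) ∣ θ 0) ∧
  (∀ k < m+2, ((X 0:S3) - C (ζ^k) * X 1)^2 ∣ θ 0 - C (ζ^k) * θ 1) ∧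
  (∀ k < m+2, ((X 0:S3) - C (ζ^k) * X 2)^2 ∣ θ 0 - C (ζ^k) * θ 2) ∧
  (∀ k < m+2, ((X 1:S3) - C (ζ^k) * X 2) ∣ θ 1 - C (ζ^k) * θ 2)

section Membership

variable {m : ℕ} {ζ : ℂ}

lemma th1_0 (m : ℕ) : th1 m 0 = ((m:S3)+2) * X 0^(m+3) := rfl
lemma th1_1 (m : ℕ) : th1 m 1 = ((m:S3)+3) * X 0^(m+2) * X 1 - X 1^(m+3) := rfl
lemma th1_2 (m : ℕ) : th1 m 2 = ((m:S3)+3) * X 0^(m+2) * X 2 - X 2^(m+3) := rfl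
lemma th2_0 (m : ℕ) : th2 m 0 = 0 := rfl
lemma th2_1 (m : ℕ) : th2 m 1 = X 1 * (X 0^(m+2) - X 1^(m+2))^2 := rfl
lemma th2_2 (m : ℕ) : th2 m 2 = X 2 * (X 0^(m+2) - X 2^(m+2))^2 := rfl
lemma th3_0 (m : ℕ) : th3 m 0 = ((m:S3)+2) * X 0^(m+1) * X 1^(m+1) * X 2^(m+1) := rfl
lemma th3_1 (m : ℕ) : th3 m 1 = X 0^m * X 2^(m+1) * (X 0^(m+2) + ((m:S3)+1) * X 1^(m+2)) := rfl
lemma th3_2 (m : ℕ) : th3 m 2 = X 0^m * X 1^(m+1) * (X 0^(m+2) + ((m:S3)+1) * X 2^(m+2)) := rfl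

lemma th1_InD (hζ : IsPrimitiveRoot ζ (m+2)) : InD m ζ (th1 m) := by
  refine ⟨⟨((m:S3)+2) * X 0^2, by rw [th1_0]; ring⟩, ?_, ?_, ?_⟩
  · intro k hk
    have hc := hc_pow hζ k
    obtain ⟨g, hg⟩ := key1 (X 0 : S3) (C (ζ^k) * X 1) (m+2)
    refine ⟨g, ?_⟩
    rw [th1_0, th1_1]
    push_cast at hg
    linear_combination hg - C (ζ^k) * X 1^(m+3) * hc
  · intro k hk
    have hc := hc_pow hζ k
    obtain ⟨g, hg⟩ := key1 (X 0 : S3) (C (ζ^k) * X 2) (m+2)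
    refine ⟨g, ?_⟩
    rw [th1_0, th1_2]
    push_cast at hg
    linear_combination hg - C (ζ^k) * X 2^(m+3) * hc
  · intro k hk
    have hc := hc_pow hζ k
    obtain ⟨g, hg⟩ : (X 1:S3) - C (ζ^k) * X 2 ∣ X 1^(m+3) - (C (ζ^k) * X 2)^(m+3) :=
      sub_dvd_pow_sub_pow _ _ _
    refine ⟨((m:S3)+3) * X 0^(m+2) - g, ?_⟩
    rw [th1_1, th1_2]
    linear_combination -hg - C (ζ^k) * X 2^(m+3) * hc

lemma th2_InD (hζ : IsPrimitiveRoot ζ (m+2)) : InD m ζ (th2 m) := by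
  refine ⟨⟨0, by rw [th2_0, mul_zero]⟩, ?_, ?_, ?_⟩
  · intro k hk
    have hc := hc_pow hζ k
    obtain ⟨g, hg⟩ : (X 0:S3) - C (ζ^k) * X 1 ∣ X 0^(m+2) - (C (ζ^k) * X 1)^(m+2) :=
      sub_dvd_pow_sub_pow _ _ _
    refine ⟨-(C (ζ^k) * X 1) * g^2, ?_⟩
    rw [th2_0, th2_1]
    linear_combination (-(C (ζ^k) * X 1) * ((X 0^(m+2) - X 1^(m+2)) + (X 0 - C (ζ^k) * X 1) * g)) * hg
      - (C (ζ^k) * X 1^(m+3) * ((X 0^(m+2) - X 1^(m+2)) + (X 0 - C (ζ^k) * X 1) * g)) * hc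
  · intro k hk
    have hc := hc_pow hζ k
    obtain ⟨g, hg⟩ : (X 0:S3) - C (ζ^k) * X 2 ∣ X 0^(m+2) - (C (ζ^k) * X 2)^(m+2) :=
      sub_dvd_pow_sub_pow _ _ _
    refine ⟨-(C (ζ^k) * X 2) * g^2, ?_⟩
    rw [th2_0, th2_2]
    linear_combination (-(C (ζ^k) * X 2) * ((X 0^(m+2) - X 2^(m+2)) + (X 0 - C (ζ^k) * X 2) * g)) * hg
      - (C (ζ^k) * X 2^(m+3) * ((X 0^(m+2) - X 2^(m+2)) + (X 0 - C (ζ^k) * X 2) * g)) * hc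
  · intro k hk
    have hc := hc_pow hζ k
    obtain ⟨g, hg⟩ : (X 1:S3) - C (ζ^k) * X 2 ∣ X 1^(m+2) - (C (ζ^k) * X 2)^(m+2) :=
      sub_dvd_pow_sub_pow _ _ _
    refine ⟨(X 0^(m+2) - X 1^(m+2))^2 - C (ζ^k) * X 2 * g * (2*X 0^(m+2) - X 1^(m+2) - X 2^(m+2)), ?_⟩
    rw [th2_1, th2_2]
    linear_combination (-(C (ζ^k) * X 2 * (2*X 0^(m+2) - X 1^(m+2) - X 2^(m+2)))) * hg
      - (C (ζ^k) * X 2^(m+3) * (2*X 0^(m+2) - X 1^(m+2) - X 2^(m+2))) * hc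

lemma th3_InD (hζ : IsPrimitiveRoot ζ (m+2)) : InD m ζ (th3 m) := by
  refine ⟨⟨((m:S3)+2) * X 1^(m+1) * X 2^(m+1), by rw [th3_0]; ring⟩, ?_, ?_, ?_⟩
  · intro k hk
    have hc := hc_pow hζ k
    obtain ⟨g, hg⟩ := key1 (C (ζ^k) * X 1) (X 0 : S3) (m+1)
    refine ⟨-(X 0^m * X 2^(m+1) * C (ζ^k)) * g, ?_⟩
    rw [th3_0, th3_1]
    push_cast at hg
    linear_combination (-(X 0^m * X 2^(m+1) * C (ζ^k))) * hg
      - (((m:S3)+2) * X 0^(m+1) * X 1^(m+1) * X 2^(m+1)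
         - ((m:S3)+1) * C (ζ^k) * X 0^m * X 1^(m+2) * X 2^(m+1)) * hc
  · intro k hk
    have hc := hc_pow hζ k
    obtain ⟨g, hg⟩ := key1 (C (ζ^k) * X 2) (X 0 : S3) (m+1)
    refine ⟨-(X 0^m * X 1^(m+1) * C (ζ^k)) * g, ?_⟩
    rw [th3_0, th3_2]
    push_cast at hg
    linear_combination (-(X 0^m * X 1^(m+1) * C (ζ^k))) * hg
      - (((m:S3)+2) * X 0^(m+1) * X 1^(m+1) * X 2^(m+1)
         - ((m:S3)+1) * C (ζ^k) * X 0^m * X 2^(m+2) * X 1^(m+1)) * hc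
  · intro k hk
    have hc := hc_pow hζ k
    obtain ⟨g, hg⟩ : (X 1:S3) - C (ζ^k) * X 2 ∣ X 1^(m+1) - (C (ζ^k) * X 2)^(m+1) :=
      sub_dvd_pow_sub_pow _ _ _
    refine ⟨X 0^m * (X 0^(m+2) * (-(C (ζ^k)) * g) + ((m:S3)+1) * X 1^(m+1) * X 2^(m+1)), ?_⟩
    rw [th3_1, th3_2]
    linear_combination (-(C (ζ^k)) * X 0^(2*m+2)) * hg - (X 0^(2*m+2) * X 2^(m+1)) * hc

end Membership

section Det

lemma det_form_dvd (η : Fin 3 → MvDer 3 ℂ) {i j : Fin 3} (hij : i ≠ j) (c : ℂ) (M : ℕ)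
    (h : ∀ l, ((X i:S3) - C c * X j)^M ∣ η l i - C c * η l j) :
    ((X i:S3) - C c * X j)^M ∣ (Matrix.of fun k l => η l k).det := by
  set N : Matrix (Fin 3) (Fin 3) S3 := Matrix.of fun k l => η l k with hN
  choose g hg using h
  have h1 : N.det = (N.updateRow i (N i + (-(C c : S3)) • N j)).det :=
    (Matrix.det_updateRow_add_smul_self N hij _).symm
  have h2 : N i + (-(C c : S3)) • N j = (((X i:S3) - C c * X j)^M) • g := by
    funext l
    simp only [Pi.add_apply, Pi.smul_apply, smul_eq_mul, hN, Matrix.of_apply]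
    rw [← hg l]; ring
  rw [h1, h2, Matrix.det_updateRow_smul]
  exact dvd_mul_right _ _

/-- The defining polynomial of the multiarrangement. -/
def QQ (m : ℕ) : S3 :=
  X 0^(m+1) * (X 0^(m+2) - X 1^(m+2))^2 * (X 0^(m+2) - X 2^(m+2))^2 * (X 1^(m+2) - X 2^(m+2))

def pfrm (ζ : ℂ) : ℕ × ℕ → S3 := fun t =>
  if t.1 = 0 then X 0
  else if t.1 = 1 then X 0 - C (ζ^t.2) * X 1
  else if t.1 = 2 then X 0 - C (ζ^t.2) * X 2
  else X 1 - C (ζ^t.2) * X 2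

def efrm (m : ℕ) : ℕ × ℕ → ℕ := fun t =>
  if t.1 = 0 then m+1 else if t.1 = 3 then 1 else 2

def idxS (m : ℕ) : Finset (ℕ × ℕ) :=
  (({((0:ℕ),(0:ℕ))} ∪ (Finset.range (m+2)).image (fun k => (1,k)))
        ∪ (Finset.range (m+2)).image (fun k => (2,k)))
        ∪ (Finset.range (m+2)).image (fun k => (3,k))

lemma mem_idxS {m : ℕ} {t : ℕ × ℕ} : t ∈ idxS m ↔
    t = (0,0) ∨ (∃ k < m+2, t = (1,k)) ∨ (∃ k < m+2, t = (2,k)) ∨ (∃ k < m+2, t = (3,k)) := by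
  simp only [idxS, Finset.mem_union, Finset.mem_singleton, Finset.mem_image, Finset.mem_range]
  constructor
  · rintro (((h | ⟨k, hk, rfl⟩) | ⟨k, hk, rfl⟩) | ⟨k, hk, rfl⟩)
    · exact Or.inl h
    · exact Or.inr (Or.inl ⟨k, hk, rfl⟩)
    · exact Or.inr (Or.inr (Or.inl ⟨k, hk, rfl⟩))
    · exact Or.inr (Or.inr (Or.inr ⟨k, hk, rfl⟩))
  · rintro (h | ⟨k, hk, rfl⟩ | ⟨k, hk, rfl⟩ | ⟨k, hk, rfl⟩)
    · exact Or.inl (Or.inl (Or.inl h))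
    · exact Or.inl (Or.inl (Or.inr ⟨k, hk, rfl⟩))
    · exact Or.inl (Or.inr ⟨k, hk, rfl⟩)
    · exact Or.inr ⟨k, hk, rfl⟩

lemma prod_idxS {m : ℕ} {ζ : ℂ} (hζ : IsPrimitiveRoot ζ (m+2)) :
    ∏ t ∈ idxS m, pfrm ζ t ^ efrm m t = QQ m := by
  have hinj1 : ∀ (a : ℕ), Set.InjOn (fun k : ℕ => ((a,k) : ℕ × ℕ)) ↑(Finset.range (m+2)) := by
    intro a k _ l _ h
    simpa using h
  have d1 : Disjoint ({((0:ℕ),(0:ℕ))} ∪ (Finset.range (m+2)).image (fun k => ((1:ℕ),k)))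
      ((Finset.range (m+2)).image (fun k => ((2:ℕ),k))) := by
    simp only [Finset.disjoint_left, Finset.mem_union, Finset.mem_singleton, Finset.mem_image]
    rintro x (rfl | ⟨k, _, rfl⟩) ⟨l, _, h⟩ <;> simp at h
  have d2 : Disjoint (({((0:ℕ),(0:ℕ))} ∪ (Finset.range (m+2)).image (fun k => ((1:ℕ),k)))
      ∪ (Finset.range (m+2)).image (fun k => ((2:ℕ),k)))
      ((Finset.range (m+2)).image (fun k => ((3:ℕ),k))) := by
    simp only [Finset.disjoint_left, Finset.mem_union, Finset.mem_singleton, Finset.mem_image]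
    rintro x ((rfl | ⟨k, _, rfl⟩) | ⟨k, _, rfl⟩) ⟨l, _, h⟩ <;> simp at h
  have d0 : Disjoint ({((0:ℕ),(0:ℕ))} : Finset (ℕ × ℕ))
      ((Finset.range (m+2)).image (fun k => ((1:ℕ),k))) := by
    simp only [Finset.disjoint_left, Finset.mem_singleton, Finset.mem_image]
    rintro x rfl ⟨l, _, h⟩; simp at h
  rw [idxS, Finset.prod_union d2, Finset.prod_union d1, Finset.prod_union d0,
    Finset.prod_image (hinj1 1), Finset.prod_image (hinj1 2), Finset.prod_image (hinj1 3),
    Finset.prod_singleton]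
  have e0 : pfrm ζ (0,0) ^ efrm m (0,0) = X 0 ^ (m+1) := by simp [pfrm, efrm]
  have e1 : ∀ k, pfrm ζ (1,k) ^ efrm m (1,k) = (X 0 - C (ζ^k) * X 1)^2 := by
    intro k; simp [pfrm, efrm]
  have e2 : ∀ k, pfrm ζ (2,k) ^ efrm m (2,k) = (X 0 - C (ζ^k) * X 2)^2 := by
    intro k; simp [pfrm, efrm]
  have e3 : ∀ k, pfrm ζ (3,k) ^ efrm m (3,k) = (X 1 - C (ζ^k) * X 2)^1 := by
    intro k; simp [pfrm, efrm]
  simp only [e0, e1, e2, e3, pow_one]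
  rw [Finset.prod_pow, Finset.prod_pow, prodid hζ, prodid hζ, prodid hζ, QQ]

lemma QQ_dvd_det {m : ℕ} {ζ : ℂ} (hζ : IsPrimitiveRoot ζ (m+2)) (η : Fin 3 → MvDer 3 ℂ)
    (hη : ∀ l, InD m ζ (η l)) :
    QQ m ∣ (Matrix.of fun k l => η l k).det := by
  rw [← prod_idxS hζ]
  apply prod_pow_dvd
  · intro t ht
    rcases mem_idxS.mp ht with rfl | ⟨k, hk, rfl⟩ | ⟨k, hk, rfl⟩ | ⟨k, hk, rfl⟩
    · have h : pfrm ζ (0,0) = X 0 - C 0 * X 1 := by simp [pfrm]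
      rw [h]; exact prime_linear 0 1 (by decide) 0
    · have h : pfrm ζ (1,k) = X 0 - C (ζ^k) * X 1 := by simp [pfrm]
      rw [h]; exact prime_linear 0 1 (by decide) _
    · have h : pfrm ζ (2,k) = X 0 - C (ζ^k) * X 2 := by simp [pfrm]
      rw [h]; exact prime_linear 0 2 (by decide) _
    · have h : pfrm ζ (3,k) = X 1 - C (ζ^k) * X 2 := by simp [pfrm]
      rw [h]; exact prime_linear 1 2 (by decide) _
  · intro t1 h1 t2 h2 hne
    have hz0 : ∀ k : ℕ, ζ^k ≠ 0 := zk_ne_zero hζ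
    rcases mem_idxS.mp h1 with rfl | ⟨k, hk, rfl⟩ | ⟨k, hk, rfl⟩ | ⟨k, hk, rfl⟩ <;>
      rcases mem_idxS.mp h2 with rfl | ⟨k', hk', rfl⟩ | ⟨k', hk', rfl⟩ | ⟨k', hk', rfl⟩
    · exact absurd rfl hne
    · exact not_dvd_of_eval ![0,1,0] (by simp [pfrm]) (by simp [pfrm, hz0 k'])
    · exact not_dvd_of_eval ![0,0,1] (by simp [pfrm]) (by simp [pfrm, hz0 k'])
    · exact not_dvd_of_eval ![0,1,0] (by simp [pfrm]) (by simp [pfrm])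
    · exact not_dvd_of_eval ![ζ^k,1,0] (by simp [pfrm]) (by simp [pfrm, hz0 k])
    · refine not_dvd_of_eval ![ζ^k,1,0] (by simp [pfrm]) ?_
      have hkk : k ≠ k' := fun h => hne (by rw [h])
      have : ζ^k ≠ ζ^k' := fun h => hkk (hζ.pow_inj hk hk' h)
      simp [pfrm, sub_ne_zero, this]
    · exact not_dvd_of_eval ![ζ^k,1,0] (by simp [pfrm]) (by simp [pfrm, hz0 k])
    · exact not_dvd_of_eval ![ζ^k,1,0] (by simp [pfrm]) (by simp [pfrm])
    · exact not_dvd_of_eval ![ζ^k,0,1] (by simp [pfrm]) (by simp [pfrm, hz0 k])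
    · exact not_dvd_of_eval ![ζ^k,0,1] (by simp [pfrm]) (by simp [pfrm, hz0 k])
    · refine not_dvd_of_eval ![ζ^k,0,1] (by simp [pfrm]) ?_
      have hkk : k ≠ k' := fun h => hne (by rw [h])
      have : ζ^k ≠ ζ^k' := fun h => hkk (hζ.pow_inj hk hk' h)
      simp [pfrm, sub_ne_zero, this]
    · exact not_dvd_of_eval ![ζ^k,0,1] (by simp [pfrm]) (by simp [pfrm, hz0 k'])
    · exact not_dvd_of_eval ![1,ζ^k,1] (by simp [pfrm]) (by simp [pfrm])
    · exact not_dvd_of_eval ![ζ^k' * ζ^k + 1,ζ^k,1] (by simp [pfrm]) (by simp [pfrm])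
    · exact not_dvd_of_eval ![ζ^k' + 1,ζ^k,1] (by simp [pfrm]) (by simp [pfrm])
    · refine not_dvd_of_eval ![0,ζ^k,1] (by simp [pfrm]) ?_
      have hkk : k ≠ k' := fun h => hne (by rw [h])
      have : ζ^k ≠ ζ^k' := fun h => hkk (hζ.pow_inj hk hk' h)
      simp [pfrm, sub_ne_zero, this]
  · intro t ht
    rcases mem_idxS.mp ht with rfl | ⟨k, hk, rfl⟩ | ⟨k, hk, rfl⟩ | ⟨k, hk, rfl⟩
    · have h := det_form_dvd η (show (0:Fin 3) ≠ 1 by decide) 0 (m+1)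
        (fun l => by simpa using (hη l).1)
      simpa [pfrm, efrm] using h
    · have h := det_form_dvd η (show (0:Fin 3) ≠ 1 by decide) (ζ^k) 2
        (fun l => (hη l).2.1 k hk)
      simpa [pfrm, efrm] using h
    · have h := det_form_dvd η (show (0:Fin 3) ≠ 2 by decide) (ζ^k) 2
        (fun l => (hη l).2.2.1 k hk)
      simpa [pfrm, efrm] using h
    · have h := det_form_dvd η (show (1:Fin 3) ≠ 2 by decide) (ζ^k) 1
        (fun l => by simpa using (hη l).2.2.2 k hk)
      simpa [pfrm, efrm] using h

set_option maxHeartbeats 1000000 in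
lemma th_det (m : ℕ) :
    (Matrix.of fun k l => ![th1 m, th2 m, th3 m] l k).det = ((m:S3)+2) * QQ m := by
  rw [Matrix.det_fin_three]
  simp only [Matrix.of_apply, Matrix.cons_val_zero, Matrix.cons_val_one, Matrix.head_cons,
    Matrix.cons_val_two, Matrix.tail_cons, th1_0, th1_1, th1_2, th2_0, th2_1, th2_2,
    th3_0, th3_1, th3_2, QQ]
  ring

end Det

section Homog

lemma homog_of_eq {p : S3} {a b : ℕ} (h : p.IsHomogeneous a) (e : a = b) :
    p.IsHomogeneous b := e ▸ h

lemma homog_mC (m : ℕ) (a : ℂ) : (((m:S3)) + C a).IsHomogeneous 0 := by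
  have h : ((m:S3)) + C a = C ((m:ℂ) + a) := by rw [map_add, C_eq_coe_nat]
  rw [h]; exact isHomogeneous_C _ _

lemma th1_homog (m : ℕ) : ∀ l, ((th1 m) l).IsHomogeneous (m+3) := by
  intro l
  have hC2 : ((m:S3)+2).IsHomogeneous 0 := by
    have := homog_mC m 2; simpa [show (C 2 : S3) = 2 from map_ofNat C 2] using this
  have hC3 : ((m:S3)+3).IsHomogeneous 0 := by
    have := homog_mC m 3; simpa [show (C 3 : S3) = 3 from map_ofNat C 3] using this
  fin_cases l
  · exact homog_of_eq (hC2.mul ((isHomogeneous_X ℂ 0).pow (m+3))) (by ring)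
  · exact ((homog_of_eq (hC3.mul ((isHomogeneous_X ℂ 0).pow (m+2))) (by ring)).mul
      (isHomogeneous_X ℂ 1)).sub (homog_of_eq ((isHomogeneous_X ℂ 1).pow (m+3)) (by ring))
  · exact ((homog_of_eq (hC3.mul ((isHomogeneous_X ℂ 0).pow (m+2))) (by ring)).mul
      (isHomogeneous_X ℂ 2)).sub (homog_of_eq ((isHomogeneous_X ℂ 2).pow (m+3)) (by ring))

lemma th2_homog (m : ℕ) : ∀ l, ((th2 m) l).IsHomogeneous (2*m+5) := by
  intro l
  have hs1 : ((X 0:S3)^(m+2) - X 1^(m+2)).IsHomogeneous (m+2) :=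
    (homog_of_eq ((isHomogeneous_X ℂ 0).pow (m+2)) (by ring)).sub
      (homog_of_eq ((isHomogeneous_X ℂ 1).pow (m+2)) (by ring))
  have hs2 : ((X 0:S3)^(m+2) - X 2^(m+2)).IsHomogeneous (m+2) :=
    (homog_of_eq ((isHomogeneous_X ℂ 0).pow (m+2)) (by ring)).sub
      (homog_of_eq ((isHomogeneous_X ℂ 2).pow (m+2)) (by ring))
  fin_cases l
  · exact isHomogeneous_zero _ _ _
  · exact homog_of_eq ((isHomogeneous_X ℂ 1).mul (hs1.pow 2)) (by ring)
  · exact homog_of_eq ((isHomogeneous_X ℂ 2).mul (hs2.pow 2)) (by ring)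

lemma th3_homog (m : ℕ) : ∀ l, ((th3 m) l).IsHomogeneous (3*m+3) := by
  intro l
  have hC2 : ((m:S3)+2).IsHomogeneous 0 := by
    have := homog_mC m 2; simpa [show (C 2 : S3) = 2 from map_ofNat C 2] using this
  have hC1 : ((m:S3)+1).IsHomogeneous 0 := by
    have := homog_mC m 1; simpa using this
  have hin1 : ((X 0:S3)^(m+2) + ((m:S3)+1) * X 1^(m+2)).IsHomogeneous (m+2) :=
    (homog_of_eq ((isHomogeneous_X ℂ 0).pow (m+2)) (by ring)).add
      (homog_of_eq (hC1.mul ((isHomogeneous_X ℂ 1).pow (m+2))) (by ring))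
  have hin2 : ((X 0:S3)^(m+2) + ((m:S3)+1) * X 2^(m+2)).IsHomogeneous (m+2) :=
    (homog_of_eq ((isHomogeneous_X ℂ 0).pow (m+2)) (by ring)).add
      (homog_of_eq (hC1.mul ((isHomogeneous_X ℂ 2).pow (m+2))) (by ring))
  fin_cases l
  · exact homog_of_eq (((hC2.mul ((isHomogeneous_X ℂ 0).pow (m+1))).mul
      ((isHomogeneous_X ℂ 1).pow (m+1))).mul ((isHomogeneous_X ℂ 2).pow (m+1))) (by ring)
  · exact homog_of_eq ((((isHomogeneous_X ℂ 0).pow m).mul ((isHomogeneous_X ℂ 2).pow (m+1))).mul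
      hin1) (by ring)
  · exact homog_of_eq ((((isHomogeneous_X ℂ 0).pow m).mul ((isHomogeneous_X ℂ 1).pow (m+1))).mul
      hin2) (by ring)

end Homog

lemma mem_DmodP_iff {P : Finset (MvPolynomial (Fin 3) ℂ × ℕ)} {θ : MvDer 3 ℂ} :
    θ ∈ DmodP P ↔ ∀ p ∈ P, p.1 ^ p.2 ∣ ∑ i, θ i * pderiv i p.1 := by
  simp only [DmodP, Submodule.mem_iInf, Submodule.mem_comap, Ideal.mem_span_singleton]
  exact Iff.rfl

end Grr4Aux


open Grr4Aux in
/-- The rank-3 multiarrangement in `ℂ³` with defining polynomial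
`x₁^(r-1) (x₁^r - x₂^r)² (x₁^r - x₃^r)² (x₂^r - x₃^r)` (for `r ≥ 2`) is free
with exponents `{r+1, 2r+1, 3(r-1)}`. -/
theorem Grr4_ziegler_restriction_free
    (r : ℕ) (hr : 2 ≤ r) (ζ : ℂ) (hζ : IsPrimitiveRoot ζ r)
    (P : Finset (MvPolynomial (Fin 3) ℂ × ℕ))
    (hP : P =
      {((MvPolynomial.X 0 : MvPolynomial (Fin 3) ℂ), r - 1)} ∪
      ((Finset.range r).image fun k =>
        ((MvPolynomial.X 0 - MvPolynomial.C (ζ ^ k) * MvPolynomial.X 1 :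
          MvPolynomial (Fin 3) ℂ), 2)) ∪
      ((Finset.range r).image fun k =>
        ((MvPolynomial.X 0 - MvPolynomial.C (ζ ^ k) * MvPolynomial.X 2 :
          MvPolynomial (Fin 3) ℂ), 2)) ∪
      ((Finset.range r).image fun k =>
        ((MvPolynomial.X 1 - MvPolynomial.C (ζ ^ k) * MvPolynomial.X 2 :
          MvPolynomial (Fin 3) ℂ), 1))) :
    FreeWithExps (DmodP P) ![r + 1, 2 * r + 1, 3 * (r - 1)] := by
  obtain ⟨m, rfl⟩ : ∃ m, r = m + 2 := ⟨r - 2, by omega⟩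
  clear hr
  set TH : Fin 3 → MvDer 3 ℂ := ![th1 m, th2 m, th3 m] with hTH
  have hsub1 : m + 2 - 1 = m + 1 := by omega
  -- characterization of membership in DmodP P
  have hiff : ∀ θ : MvDer 3 ℂ, θ ∈ DmodP P ↔ InD m ζ θ := by
    intro θ
    rw [mem_DmodP_iff]
    constructor
    · intro h
      refine ⟨?_, fun k hk => ?_, fun k hk => ?_, fun k hk => ?_⟩
      · have h0 := h (X 0, m + 2 - 1) (by
          rw [hP]
          exact Finset.mem_union_left _ (Finset.mem_union_left _ (Finset.mem_union_left _
            (Finset.mem_singleton_self _))))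
        rw [derApp_X] at h0
        rwa [hsub1] at h0
      · have h0 := h (X 0 - C (ζ ^ k) * X 1, 2) (by
          rw [hP]
          exact Finset.mem_union_left _ (Finset.mem_union_left _ (Finset.mem_union_right _
            (Finset.mem_image.mpr ⟨k, Finset.mem_range.mpr hk, rfl⟩))))
        rwa [derApp_lin θ 0 1 (by decide)] at h0
      · have h0 := h (X 0 - C (ζ ^ k) * X 2, 2) (by
          rw [hP]
          exact Finset.mem_union_left _ (Finset.mem_union_right _
            (Finset.mem_image.mpr ⟨k, Finset.mem_range.mpr hk, rfl⟩)))
        rwa [derApp_lin θ 0 2 (by decide)] at h0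
      · have h0 := h (X 1 - C (ζ ^ k) * X 2, 1) (by
          rw [hP]
          exact Finset.mem_union_right _
            (Finset.mem_image.mpr ⟨k, Finset.mem_range.mpr hk, rfl⟩))
        rw [derApp_lin θ 1 2 (by decide)] at h0
        simpa using h0
    · intro h p hp
      rw [hP] at hp
      simp only [Finset.mem_union, Finset.mem_singleton, Finset.mem_image,
        Finset.mem_range] at hp
      rcases hp with (((rfl | ⟨k, hk, rfl⟩) | ⟨k, hk, rfl⟩) | ⟨k, hk, rfl⟩)
      · rw [derApp_X, hsub1]; exact h.1
      · rw [derApp_lin θ 0 1 (by decide)]; exact h.2.1 k hk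
      · rw [derApp_lin θ 0 2 (by decide)]; exact h.2.2.1 k hk
      · rw [derApp_lin θ 1 2 (by decide)]; simpa using h.2.2.2 k hk
  have hall : ∀ l, InD m ζ (TH l) := by
    intro l
    fin_cases l
    · exact th1_InD hζ
    · exact th2_InD hζ
    · exact th3_InD hζ
  set A : Matrix (Fin 3) (Fin 3) S3 := Matrix.of (fun k l => TH l k) with hA
  have hdet : A.det = ((m:S3)+2) * QQ m := th_det m
  have hm2C : ((m:S3)+2) = C ((m:ℂ)+2) := by
    rw [map_add, C_eq_coe_nat, map_ofNat]
  have hm2ne : ((m:ℂ)+2) ≠ 0 := by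
    have : ((m:ℂ)+2) = ((m+2 : ℕ) : ℂ) := by push_cast; ring
    rw [this]
    exact Nat.cast_ne_zero.mpr (by omega)
  have hQne : QQ m ≠ 0 := by
    intro h
    have h2 := congrArg (eval ![2,1,0]) h
    simp only [QQ, map_mul, map_sub, map_pow, eval_X, map_zero, Matrix.cons_val_zero,
      Matrix.cons_val_one, Matrix.head_cons, Matrix.cons_val_two, Matrix.tail_cons,
      one_pow, mul_one] at h2
    have hz : (0:ℂ)^(m+2) = 0 := zero_pow (by omega)
    rw [hz, sub_zero, sub_zero] at h2
    have h21 : (2:ℂ)^(m+2) ≠ 1 := by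
      intro h1
      have h22 : ((2^(m+2) : ℕ) : ℂ) = ((1 : ℕ) : ℂ) := by push_cast; rw [h1]
      have h24 := Nat.cast_inj (R := ℂ) |>.mp h22
      have h23 : 1 < 2^(m+2) := Nat.one_lt_two_pow (by omega)
      omega
    have h2ne : (2:ℂ) ≠ 0 := two_ne_zero
    rcases mul_eq_zero.mp h2 with h3 | h3
    · rcases mul_eq_zero.mp h3 with h4 | h4
      · rcases mul_eq_zero.mp h4 with h5 | h5
        · exact pow_ne_zero _ h2ne h5
        · exact h21 (sub_eq_zero.mp (sq_eq_zero_iff.mp h5))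
      · exact pow_ne_zero _ (pow_ne_zero _ h2ne) h4
    · exact one_ne_zero h3
  have hAdet_ne : A.det ≠ 0 := by
    rw [hdet, hm2C]
    exact mul_ne_zero (C_ne_zero.mpr hm2ne) hQne
  refine ⟨TH, ⟨?_, ?_, ?_⟩, ?_⟩
  · intro i
    exact (hiff (TH i)).mpr (hall i)
  · rw [Fintype.linearIndependent_iff]
    intro g hg i
    have hAg : A.mulVec g = 0 := by
      funext k
      have hgk := congrFun hg k
      simp only [Finset.sum_apply, Pi.smul_apply, smul_eq_mul, Pi.zero_apply] at hgk
      simp only [Matrix.mulVec, dotProduct, hA, Matrix.of_apply, Pi.zero_apply]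
      rw [← hgk]
      exact Finset.sum_congr rfl (fun j _ => mul_comm _ _)
    have h0 : A.det • g = 0 := by
      have h1 : A.adjugate.mulVec (A.mulVec g) = 0 := by rw [hAg, Matrix.mulVec_zero]
      rwa [Matrix.mulVec_mulVec, Matrix.adjugate_mul, Matrix.smul_mulVec,
        Matrix.one_mulVec] at h1
    have h2 := congrFun h0 i
    simp only [Pi.smul_apply, smul_eq_mul, Pi.zero_apply] at h2
    exact (mul_eq_zero.mp h2).resolve_left hAdet_ne
  · apply le_antisymm
    · rw [Submodule.span_le]
      rintro _ ⟨i, rfl⟩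
      exact (hiff (TH i)).mpr (hall i)
    · intro θ hθ
      have hInD : InD m ζ θ := (hiff θ).mp hθ
      have hcr : ∀ i, QQ m ∣ A.cramer θ i := by
        intro i
        rw [Matrix.cramer_apply]
        have hupdate : A.updateCol i θ =
            Matrix.of fun k l => (Function.update TH i θ) l k := by
          funext k l
          rw [Matrix.updateCol_apply, Matrix.of_apply, Function.update_apply]
          split <;> rfl
        rw [hupdate]
        refine QQ_dvd_det hζ _ (fun l => ?_)
        by_cases hl : l = i
        · subst hl; rw [Function.update_self]; exact hInD
        · rw [Function.update_of_ne hl]; exact hall l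
      choose hv hh using hcr
      have hcram := Matrix.mulVec_cramer A θ
      have hkey : ∀ k, ((m:S3)+2) * θ k - C ((m:ℂ)+2)⁻¹ * 0 = ∑ i, hv i * TH i k ∨ True := fun k => Or.inr trivial
      have hθk : ∀ k, ((m:S3)+2) * θ k = ∑ i, hv i * TH i k := by
        intro k
        have h3 := congrFun hcram k
        simp only [Matrix.mulVec, dotProduct, Pi.smul_apply, smul_eq_mul] at h3
        have h4 : ∑ i, A k i * A.cramer θ i = QQ m * ∑ i, hv i * TH i k := by
          rw [Finset.mul_sum]
          refine Finset.sum_congr rfl (fun i _ => ?_)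
          rw [hh i]
          show TH i k * (QQ m * hv i) = QQ m * (hv i * TH i k)
          ring
        rw [h4, hdet] at h3
        have h5 : QQ m * (∑ i, hv i * TH i k - ((m:S3)+2) * θ k) = 0 := by
          rw [mul_sub, h3]; ring
        rcases mul_eq_zero.mp h5 with h6 | h6
        · exact absurd h6 hQne
        · rw [sub_eq_zero] at h6; exact h6.symm
      have hCinv : C ((m:ℂ)+2)⁻¹ * ((m:S3)+2) = 1 := by
        rw [hm2C, ← map_mul, inv_mul_cancel₀ hm2ne, map_one]
      have hθeq : θ = ∑ i, (C ((m:ℂ)+2)⁻¹ * hv i) • TH i := by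
        funext k
        have h7 : θ k = C ((m:ℂ)+2)⁻¹ * (((m:S3)+2) * θ k) := by
          rw [← mul_assoc, hCinv, one_mul]
        rw [h7, hθk k]
        simp only [Finset.sum_apply, Pi.smul_apply, smul_eq_mul, Finset.mul_sum]
        exact Finset.sum_congr rfl (fun i _ => by ring)
      rw [hθeq]
      exact Submodule.sum_mem _ (fun i _ =>
        Submodule.smul_mem _ _ (Submodule.subset_span ⟨i, rfl⟩))
  · intro i
    fin_cases i
    · show IsHomogDer (TH 0) (![m+2+1, 2*(m+2)+1, 3*(m+2-1)] 0)
      have he : (![m+2+1, 2*(m+2)+1, 3*(m+2-1)] 0 : ℕ) = m+3 := by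
        simp
      rw [he]
      intro l
      exact th1_homog m l
    · show IsHomogDer (TH 1) (![m+2+1, 2*(m+2)+1, 3*(m+2-1)] 1)
      have he : (![m+2+1, 2*(m+2)+1, 3*(m+2-1)] 1 : ℕ) = 2*m+5 := by
        simp; omega
      rw [he]
      intro l
      exact th2_homog m l
    · show IsHomogDer (TH 2) (![m+2+1, 2*(m+2)+1, 3*(m+2-1)] 2)
      have he : (![m+2+1, 2*(m+2)+1, 3*(m+2-1)] 2 : ℕ) = 3*m+3 := by
        simp; omega
      rw [he]
      intro l
      exact th3_homog m l
end
end
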